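/- arXiv:1502.04231 — 2 statements merged into one kernel-verified Lean document; each statement's English description precedes it below -/
import Mathlib

section
/- Let X = (x₀, x₁, x₂) ∈ ℝ³ with 0 < x₀ < x₁ < x₂ and x₀, x₁, x₂ linearly independent over ℚ, and consider any run of the Smallest Vector Algorithm started at X. Then the following three assertions are equivalent: (a) lim_{s→∞, s∈T} A⁽ˢ⁾/‖g_III'⁽ˢ⁾‖² = 0; (b) lim_{s→∞, s∈T} ρ⁽ˢ⁾/‖g_III'⁽ˢ⁾‖ = 0; (c) lim_{s→∞, s∈T} ( ‖g_I'⁽ˢ⁾‖/‖g_II'⁽ˢ⁾‖ + (π − ∠(g_II'⁽ˢ⁾, g_III'⁽ˢ⁾)) ) = 0, where ∠ denotes the undirected angle. -/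
open Filter InnerProductGeometry Polynomial

noncomputable section
set_option maxHeartbeats 1600000

abbrev E3 := EuclideanSpace ℝ (Fin 3)

/-- Identify a plain function `Fin 3 → ℝ` with a point of Euclidean 3-space. -/
def toE3 (v : Fin 3 → ℝ) : E3 := (WithLp.equiv 2 (Fin 3 → ℝ)).symm v

/-- The point of Euclidean 3-space attached to an integer vector. -/
def toR3 (v : Fin 3 → ℤ) : E3 := toE3 fun i => (v i : ℝ)

/-- Orthogonal projection of `h` onto the line `ℝ·X` (written `h''`). -/
def projL (X h : E3) : E3 := ((inner ℝ h X : ℝ) / ‖X‖ ^ 2) • X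

/-- Orthogonal projection of `h` onto the plane `X^⊥` (written `h'`). -/
def projPl (X h : E3) : E3 := h - projL X h

/-- `gᵢ'` : projection of the `i`-th column onto the plane `X^⊥`. -/
def colP (X : E3) (g : Fin 3 → Fin 3 → ℤ) (i : Fin 3) : E3 := projPl X (toR3 (g i))

/-- `gᵢ''` : projection of the `i`-th column onto the line `ℝ·X`. -/
def colL (X : E3) (g : Fin 3 → Fin 3 → ℤ) (i : Fin 3) : E3 := projL X (toR3 (g i))

def max3 (f : Fin 3 → ℝ) : ℝ := max (f 0) (max (f 1) (f 2))

def min3 (f : Fin 3 → ℝ) : ℝ := min (f 0) (min (f 1) (f 2))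

/-- One step of the Smallest Vector Algorithm: from the columns `g` to the columns `g'`. -/
def SVAStep (X : E3) (g g' : Fin 3 → Fin 3 → ℤ) : Prop :=
  ∃ f : Fin 3 → Fin 3 → ℤ,
    ((min3 ![‖colP X g 1 - colP X g 0‖, ‖colP X g 2 - colP X g 1‖, ‖colP X g 2 - colP X g 0‖]
        = ‖colP X g 1 - colP X g 0‖ ∧ f = ![g 0, g 1 - g 0, g 2]) ∨
     (min3 ![‖colP X g 1 - colP X g 0‖, ‖colP X g 2 - colP X g 1‖, ‖colP X g 2 - colP X g 0‖]
        = ‖colP X g 2 - colP X g 1‖ ∧ f = ![g 0, g 1, g 2 - g 1]) ∨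
     (min3 ![‖colP X g 1 - colP X g 0‖, ‖colP X g 2 - colP X g 1‖, ‖colP X g 2 - colP X g 0‖]
        = ‖colP X g 2 - colP X g 0‖ ∧ f = ![g 0, g 1, g 2 - g 0])) ∧
    ∃ σ : Equiv.Perm (Fin 3), (∀ i, g' i = f (σ i)) ∧
      ‖colL X g' 0‖ ≤ ‖colL X g' 1‖ ∧ ‖colL X g' 1‖ ≤ ‖colL X g' 2‖

/-- A run of the Smallest Vector Algorithm started at `X`: `g s i` is the `i`-th column of `G⁽ˢ⁾`. -/
def IsSVARun (X : E3) (g : ℕ → Fin 3 → Fin 3 → ℤ) : Prop :=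
  (∀ i j, g 0 i j = if i = j then 1 else 0) ∧ ∀ s, SVAStep X (g s) (g (s + 1))

/-- The cofactor vector `X⁽ˢ⁾ = ᵀG⁽ˢ⁾·X`. -/
def cofVec (X : E3) (g : Fin 3 → Fin 3 → ℤ) (i : Fin 3) : ℝ := (inner ℝ (toR3 (g i)) X : ℝ)

/-- The cross product of two vectors of Euclidean 3-space. -/
def cross3 (u v : E3) : E3 :=
  toE3 ![u 1 * v 2 - u 2 * v 1, u 2 * v 0 - u 0 * v 2, u 0 * v 1 - u 1 * v 0]

/-- `A⁽ˢ⁾`: twice the area of the triangle with vertices `u`, `v`, `w`. -/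
def twiceArea (u v w : E3) : ℝ := ‖cross3 u v + cross3 v w + cross3 w u‖

/-- The hexagon `H'⁽ˢ⁾`: convex hull of `±g₀', ±g₁', ±g₂'` in the plane `X^⊥`. -/
def hexHull (Y : E3) (g : Fin 3 → Fin 3 → ℤ) : Set E3 :=
  convexHull ℝ {colP Y g 0, colP Y g 1, colP Y g 2, -colP Y g 0, -colP Y g 1, -colP Y g 2}

/-- `ρ⁽ˢ⁾`: the radius of the greatest disk of the plane `X^⊥` centered at `0`
contained in the hexagon `H'⁽ˢ⁾`. -/
def inRadius (Y : E3) (g : Fin 3 → Fin 3 → ℤ) : ℝ :=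
  sSup {r : ℝ | 0 ≤ r ∧ {y : E3 | (inner ℝ y Y : ℝ) = 0 ∧ ‖y‖ ≤ r} ⊆ hexHull Y g}


-- ===================== auxiliary development =====================

local notation "⟪" x ", " y "⟫" => @inner ℝ _ _ x y

section CoordLemmas

lemma inner3 (x y : E3) : ⟪x, y⟫ = x 0 * y 0 + x 1 * y 1 + x 2 * y 2 := by
  simp [PiLp.inner_apply, Fin.sum_univ_three]; ring

lemma norm_sq3 (x : E3) : ‖x‖ ^ 2 = x 0^2 + x 1^2 + x 2^2 := by
  rw [← real_inner_self_eq_norm_sq, inner3]; ring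

@[simp] lemma cross3_apply0 (u v : E3) : cross3 u v 0 = u 1 * v 2 - u 2 * v 1 := by
  simp [cross3, toE3]
@[simp] lemma cross3_apply1 (u v : E3) : cross3 u v 1 = u 2 * v 0 - u 0 * v 2 := by
  simp [cross3, toE3]
@[simp] lemma cross3_apply2 (u v : E3) : cross3 u v 2 = u 0 * v 1 - u 1 * v 0 := by
  simp [cross3, toE3]

@[simp] lemma E3_add_apply (x y : E3) (i : Fin 3) : (x + y) i = x i + y i := rfl
@[simp] lemma E3_sub_apply (x y : E3) (i : Fin 3) : (x - y) i = x i - y i := rfl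
@[simp] lemma E3_neg_apply (x : E3) (i : Fin 3) : (-x) i = -(x i) := rfl
@[simp] lemma E3_smul_apply (a : ℝ) (x : E3) (i : Fin 3) : (a • x) i = a * x i := rfl

lemma cross_norm_sq (u v : E3) : ‖cross3 u v‖^2 = ‖u‖^2 * ‖v‖^2 - ⟪u, v⟫^2 := by
  rw [norm_sq3, norm_sq3, norm_sq3, inner3]; simp; ring

lemma cross3_swap (u v : E3) : cross3 v u = -cross3 u v := by
  ext i; fin_cases i <;> simp <;> ring

lemma inner_cross_left (u v : E3) : ⟪cross3 u v, u⟫ = 0 := by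
  rw [inner3]; simp; ring

lemma inner_cross_right (u v : E3) : ⟪cross3 u v, v⟫ = 0 := by
  rw [inner3]; simp; ring

lemma inner_cross_cycle (u v w : E3) : ⟪cross3 u v, w⟫ = ⟪cross3 v w, u⟫ := by
  rw [inner3, inner3]; simp; ring

lemma cross_expand (u v w : E3) :
    cross3 (u - v) (w - v) = -(cross3 u v + cross3 v w + cross3 w u) := by
  ext i; fin_cases i <;> simp <;> ring

lemma cross3_combo (a b : ℝ) (e z : E3) :
    cross3 (a • e + z) (b • e) = b • cross3 z e := by
  ext i; fin_cases i <;> simp <;> ring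

lemma bac_cab (x y z : E3) :
    cross3 (cross3 x y) z = ⟪x, z⟫ • y - ⟪y, z⟫ • x := by
  ext i; fin_cases i <;> rw [inner3, inner3] <;> simp <;> ring

lemma eq_of_sq_eq {a b : ℝ} (ha : 0 ≤ a) (hb : 0 ≤ b) (h : a^2 = b^2) : a = b := by
  nlinarith [sq_nonneg (a-b), sq_nonneg (a+b)]

end CoordLemmas

section CoreLemmas

private lemma hlp_eps {ε : ℝ} (hε : 0 < ε) (hε1 : ε ≤ 1/10) : ε^2 ≤ 1/100 := by nlinarith

private lemma hlp_gap {c ε δ g : ℝ} (hc : 0 < c) (hε : 0 < ε) (hε1 : ε ≤ 1/10)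
    (hδ2 : δ^2 ≤ ε^2*c^2) (h : c^2 < g + δ^2) : (c*(1-ε^2))^2 < g := by
  nlinarith [mul_nonneg (mul_nonneg (sq_nonneg c) (sq_nonneg ε)) (by nlinarith : (0:ℝ) ≤ 1 - ε^2)]

private lemma hlp_delta {δ L ε c : ℝ} (hδ0 : 0 ≤ δ) (hc : 0 < c) (hL : c < L)
    (h : δ * L ≤ ε * c^2) : δ ≤ ε * c := by nlinarith

private lemma hlp_abs {t a : ℝ} (ha : 0 ≤ a) (h : t^2 ≤ a^2) : |t| ≤ a := by
  nlinarith [sq_abs t, abs_nonneg t]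

private lemma hlp_negsq {x P : ℝ} (hP : 0 ≤ P) (h : x ≤ -P) : P^2 ≤ x^2 := by nlinarith

private lemma hlp_sqdiff {tv tw c : ℝ} (h0v : 0 ≤ tv) (h0w : 0 ≤ tw) (hvc : tv ≤ c)
    (hwc : tw ≤ c) : (tv - tw)^2 ≤ c^2 := by
  nlinarith [mul_nonneg (sub_nonneg.2 hvc) (sub_nonneg.2 hwc), mul_nonneg h0v (sub_nonneg.2 hvc),
    mul_nonneg h0w (sub_nonneg.2 hwc), mul_nonneg h0v h0w]

private lemma hlp_nusq {d δ nu : ℝ} (hd0 : 0 ≤ d) (hδ0 : 0 ≤ δ) (hnu0 : 0 ≤ nu)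
    (h1 : d - δ ≤ nu) : d^2 - 2*(d*δ) ≤ nu^2 := by
  rcases le_or_gt δ d with h | h
  · nlinarith [mul_self_le_mul_self (by linarith : (0:ℝ) ≤ d - δ) h1, sq_nonneg δ]
  · nlinarith [mul_le_mul_of_nonneg_left h.le hd0, sq_nonneg nu]

private lemma hlp_caseV {ε a b c tu d δ nu : ℝ} (hc : 0 < c)
    (hec : c^2*ε ≤ c^2*(1/10)) (hec2 : c^2*ε^2 ≤ c^2*(1/100))
    (htu2' : (c*(1-ε^2))^2 ≤ tu^2) (hd2 : b^2 - (ε^2*c)^2 ≤ d^2)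
    (hnusq : d^2 - 2*(d*δ) ≤ nu^2) (hdδ : d*δ ≤ c*(ε*c))
    (ea : a^2 = tu^2 + nu^2) (hab2 : a^2 ≤ b^2) : False := by
  nlinarith [mul_pos hc hc]

private lemma hlp_caseW {ε b c tv d : ℝ} (hc : 0 < c)
    (hec2 : c^2*ε^2 ≤ c^2*(1/100))
    (htv2' : (c*(1-ε^2))^2 ≤ tv^2) (hd2 : c^2 - (ε^2*c)^2 ≤ d^2)
    (eb : b^2 = tv^2 + d^2) (hbc2 : b^2 ≤ c^2) : False := by
  nlinarith [mul_pos hc hc]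

private lemma hlp_midA {ε a c tu nu : ℝ} (hε : 0 < ε) (hε1 : ε ≤ 1/10) (hc : 0 < c)
    (htu2' : tu^2 ≤ (ε^2*c)^2) (hnu3 : nu ≤ 3*(ε*c)) (hnu0 : 0 ≤ nu)
    (ea : a^2 = tu^2 + nu^2) : a^2 ≤ (4*ε*c)^2 := by
  nlinarith [mul_nonneg (mul_nonneg (sq_nonneg c) (sq_nonneg ε)) (by nlinarith : (0:ℝ) ≤ 1 - ε^2),
    mul_nonneg (mul_nonneg hε.le hc.le) (mul_nonneg hε.le hc.le)]

private lemma hlp_d2e {d ε c : ℝ} (hd0 : 0 ≤ d) (hε : 0 < ε) (hc : 0 < c)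
    (hd2 : d^2 ≤ c^2 - (c*(1-2*ε^2))^2) : d ≤ 2*(ε*c) := by
  refine le_of_pow_le_pow_left₀ (n := 2) (by norm_num) (by positivity) ?_
  nlinarith [sq_nonneg (c*ε*ε)]

private lemma hlp_midInner {ε c tv tw d : ℝ} (hε : 0 < ε) (hε1 : ε ≤ 1/10) (hc : 0 < c)
    (hP : (0:ℝ) < c*(1-2*ε^2)) (hvP : tv < -(c*(1-2*ε^2))) (hwP : c*(1-2*ε^2) < tw)
    (hd2 : d^2 ≤ c^2 - (c*(1-2*ε^2))^2) :
    tv*tw + d^2 ≤ -(1 - 8*ε^2) * c^2 := by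
  have htvtw : tv*tw ≤ -((c*(1-2*ε^2))*(c*(1-2*ε^2))) := by nlinarith
  nlinarith [sq_nonneg (c*ε*ε)]

lemma core_aux (ε a b c tu tv tw d δ nu : ℝ)
    (hε : 0 < ε) (hε1 : ε ≤ 1/10) (hc : 0 < c)
    (ha0 : 0 ≤ a) (hb0 : 0 ≤ b) (hab : a ≤ b) (hbc : b ≤ c)
    (hδ0 : 0 ≤ δ) (hd0 : 0 ≤ d) (hnu0 : 0 ≤ nu)
    (hA : δ * |tv - tw| ≤ ε * c^2) (hnu : |nu - d| ≤ δ)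
    (ea : a^2 = tu^2 + nu^2) (eb : b^2 = tv^2 + d^2) (ec : c^2 = tw^2 + d^2)
    (guv : c^2 < (tu - tv)^2 + δ^2) (guw : c^2 < (tu - tw)^2 + δ^2)
    (gvw : c^2 < (tv - tw)^2) (htw : 0 ≤ tw) :
    a ≤ 4*ε*c ∧ c*(1 - 2*ε^2) ≤ b ∧ tv*tw + d^2 ≤ -(1 - 8*ε^2) * c^2 := by
  have hε2 : ε^2 ≤ 1/100 := hlp_eps hε hε1
  have he1 : (0:ℝ) ≤ 1 - ε^2 := by linarith
  have hL : c < |tv - tw| :=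
    lt_of_pow_lt_pow_left₀ 2 (abs_nonneg _) (by rw [sq_abs]; exact gvw)
  have hδ : δ ≤ ε * c := hlp_delta hδ0 hc hL hA
  have hδ2 : δ^2 ≤ ε^2 * c^2 := by
    calc δ^2 ≤ (ε*c)^2 := pow_le_pow_left₀ hδ0 hδ 2
    _ = ε^2*c^2 := by ring
  have hec : c^2*ε ≤ c^2*(1/10) := mul_le_mul_of_nonneg_left hε1 (sq_nonneg c)
  have hec2 : c^2*ε^2 ≤ c^2*(1/100) := mul_le_mul_of_nonneg_left hε2 (sq_nonneg c)
  have htu2 : tu^2 ≤ a^2 := by linarith [sq_nonneg nu]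
  have htv2 : tv^2 ≤ b^2 := by linarith [sq_nonneg d]
  have htw2 : tw^2 ≤ c^2 := by linarith [sq_nonneg d]
  have htua : |tu| ≤ a := hlp_abs ha0 htu2
  have htvb : |tv| ≤ b := hlp_abs hb0 htv2
  have htwc : tw ≤ c := le_trans (le_abs_self tw) (hlp_abs hc.le htw2)
  have hdc : d ≤ c := le_trans (le_abs_self d) (hlp_abs hc.le (by linarith [sq_nonneg tw]))
  have hab2 : a^2 ≤ b^2 := pow_le_pow_left₀ ha0 hab 2
  have hbc2 : b^2 ≤ c^2 := pow_le_pow_left₀ hb0 hbc 2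
  have htv : tv < 0 := by
    by_contra hcon
    push_neg at hcon
    have h1 : tv ≤ b := le_trans (le_abs_self tv) htvb
    have h5 := hlp_sqdiff hcon htw (le_trans h1 hbc) htwc
    linarith [gvw]
  have hguv' : (c*(1-ε^2))^2 < (tu - tv)^2 := hlp_gap hc hε hε1 hδ2 (by linarith)
  have hguw' : (c*(1-ε^2))^2 < (tu - tw)^2 := hlp_gap hc hε hε1 hδ2 (by linarith)
  have hvw : c < tw - tv := by
    have habs : |tv - tw| = tw - tv := by
      rw [abs_sub_comm]; exact abs_of_nonneg (by linarith)
    rw [habs] at hL; exact hL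
  have hnusq : d^2 - 2*(d*δ) ≤ nu^2 :=
    hlp_nusq hd0 hδ0 hnu0 (by linarith [(abs_le.1 hnu).1])
  have hdδ : d*δ ≤ c*(ε*c) := mul_le_mul hdc hδ hδ0 hc.le
  have hcc1 : 0 ≤ c*(1-ε^2) := mul_nonneg hc.le he1
  rcases le_or_gt tu tv with hcase | hcase1
  · exfalso
    have h1 : c*(1-ε^2) < tv - tu :=
      lt_of_pow_lt_pow_left₀ 2 (by linarith) (by rw [show (tv-tu)^2 = (tu-tv)^2 from by ring]; exact hguv')
    have h3 : tu ≤ -(c*(1-ε^2)) := by linarith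
    have htu2' : (c*(1-ε^2))^2 ≤ tu^2 := hlp_negsq hcc1 h3
    have h2 : -(ε^2*c) ≤ tv := by linarith [neg_abs_le tu]
    have htvsq : tv^2 ≤ (ε^2*c)^2 := sq_le_sq' h2 (by linarith : tv ≤ ε^2*c)
    have hd2 : b^2 - (ε^2*c)^2 ≤ d^2 := by linarith
    exact hlp_caseV hc hec hec2 htu2' hd2 hnusq hdδ ea hab2
  rcases le_or_gt tw tu with hcase2 | hcase2
  · exfalso
    have h1 : c*(1-ε^2) < tu - tw :=
      lt_of_pow_lt_pow_left₀ 2 (by linarith) hguw'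
    have h2 : tw ≤ ε^2*c := by linarith [le_abs_self tu]
    have h4 : tv ≤ -(c*(1-ε^2)) := by linarith
    have htv2' : (c*(1-ε^2))^2 ≤ tv^2 := hlp_negsq hcc1 h4
    have htwsq : tw^2 ≤ (ε^2*c)^2 := pow_le_pow_left₀ htw h2 2
    have hd2 : c^2 - (ε^2*c)^2 ≤ d^2 := by linarith
    exact hlp_caseW hc hec2 htv2' hd2 eb hbc2
  · have h1 : c*(1-ε^2) < tu - tv :=
      lt_of_pow_lt_pow_left₀ 2 (by linarith) hguv'
    have h2 : c*(1-ε^2) < tw - tu :=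
      lt_of_pow_lt_pow_left₀ 2 (by linarith)
        (by rw [show (tw-tu)^2 = (tu-tw)^2 from by ring]; exact hguw')
    have hbd1 : -(ε^2*c) < tu := by linarith [neg_abs_le tv]
    have hbd2 : tu < ε^2*c := by linarith [le_abs_self tv]
    have hP : (0:ℝ) < c*(1-2*ε^2) := mul_pos hc (by linarith)
    have hvP : tv < -(c*(1-2*ε^2)) := by linarith
    have hwP : c*(1-2*ε^2) < tw := by linarith
    have htwP : (c*(1-2*ε^2))^2 ≤ tw^2 := pow_le_pow_left₀ hP.le hwP.le 2
    have hd2 : d^2 ≤ c^2 - (c*(1-2*ε^2))^2 := by linarith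
    have hd2e : d ≤ 2*(ε*c) := hlp_d2e hd0 hε hc hd2
    have hnud : nu ≤ d + δ := by linarith [(abs_le.1 hnu).2]
    have htu2' : tu^2 ≤ (ε^2*c)^2 := sq_le_sq' hbd1.le hbd2.le
    refine ⟨?_, ?_, ?_⟩
    · refine le_of_pow_le_pow_left₀ (n := 2) (by norm_num) (by positivity) ?_
      exact hlp_midA hε hε1 hc htu2' (by linarith) hnu0 ea
    · refine le_of_pow_le_pow_left₀ (n := 2) (by norm_num) hb0 ?_
      have := hlp_negsq hP.le hvP.le
      linarith [sq_nonneg d]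
    · exact hlp_midInner hε hε1 hc hP hvP hwP hd2

lemma core (ε a b c tu tv tw d δ nu : ℝ)
    (hε : 0 < ε) (hε1 : ε ≤ 1/10) (hc : 0 < c)
    (ha0 : 0 ≤ a) (hb0 : 0 ≤ b) (hab : a ≤ b) (hbc : b ≤ c)
    (hδ0 : 0 ≤ δ) (hd0 : 0 ≤ d) (hnu0 : 0 ≤ nu)
    (hA : δ * |tv - tw| ≤ ε * c^2) (hnu : |nu - d| ≤ δ)
    (ea : a^2 = tu^2 + nu^2) (eb : b^2 = tv^2 + d^2) (ec : c^2 = tw^2 + d^2)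
    (guv : c^2 < (tu - tv)^2 + δ^2) (guw : c^2 < (tu - tw)^2 + δ^2)
    (gvw : c^2 < (tv - tw)^2) :
    a ≤ 4*ε*c ∧ c*(1 - 2*ε^2) ≤ b ∧ tv*tw + d^2 ≤ -(1 - 8*ε^2) * c^2 := by
  rcases le_or_gt 0 tw with h | h
  · exact core_aux ε a b c tu tv tw d δ nu hε hε1 hc ha0 hb0 hab hbc hδ0 hd0 hnu0 hA hnu
      ea eb ec guv guw gvw h
  · have := core_aux ε a b c (-tu) (-tv) (-tw) d δ nu hε hε1 hc ha0 hb0 hab hbc hδ0 hd0 hnu0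
      (by rw [show -tv - -tw = -(tv - tw) from by ring, abs_neg]; exact hA) hnu
      (by rw [neg_sq]; exact ea) (by rw [neg_sq]; exact eb) (by rw [neg_sq]; exact ec)
      (by rw [show -tu - -tv = -(tu - tv) from by ring, neg_sq]; exact guv)
      (by rw [show -tu - -tw = -(tu - tw) from by ring, neg_sq]; exact guw)
      (by rw [show -tv - -tw = -(tv - tw) from by ring, neg_sq]; exact gvw)
      (by linarith)
    rcases this with ⟨h1, h2, h3⟩
    refine ⟨h1, h2, ?_⟩
    rw [show -tv * -tw = tv * tw from by ring] at h3
    exact h3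

end CoreLemmas

section NeedleLemma

lemma decomp (x e : E3) (he : ‖e‖ = 1) : ‖x‖^2 = ⟪x, e⟫^2 + ‖x - ⟪x, e⟫ • e‖^2 := by
  have h : ‖x - ⟪x, e⟫ • e‖^2 = ‖x‖^2 - 2 * ⟪x, ⟪x, e⟫ • e⟫ + ‖⟪x, e⟫ • e‖^2 :=
    norm_sub_sq_real x _
  rw [real_inner_smul_right, norm_smul, Real.norm_eq_abs] at h
  rw [he] at h
  simp only [mul_one] at h
  have : |⟪x, e⟫|^2 = ⟪x, e⟫^2 := sq_abs _
  nlinarith [h, this]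

lemma perp_inner (x e : E3) (he : ‖e‖ = 1) : ⟪x - ⟪x, e⟫ • e, e⟫ = 0 := by
  rw [inner_sub_left, real_inner_smul_left, real_inner_self_eq_norm_sq, he]
  ring

lemma needle (u v w : E3) (ε : ℝ) (hε : 0 < ε) (hε1 : ε ≤ 1/10)
    (hab : ‖u‖ ≤ ‖v‖) (hbc : ‖v‖ ≤ ‖w‖) (hc : 0 < ‖w‖)
    (duv : ‖w‖ < ‖u - v‖) (duw : ‖w‖ < ‖u - w‖) (dvw : ‖w‖ < ‖v - w‖)
    (hA : twiceArea u v w ≤ ε * ‖w‖^2) :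
    ‖u‖ ≤ 4*ε*‖w‖ ∧ ‖w‖*(1 - 2*ε^2) ≤ ‖v‖ ∧ ⟪v, w⟫ ≤ -(1-8*ε^2) * ‖w‖^2 := by
  have hL0 : 0 < ‖w - v‖ := by rw [norm_sub_rev]; linarith
  set L : ℝ := ‖w - v‖ with hLdef
  set e : E3 := L⁻¹ • (w - v) with hedef
  have he : ‖e‖ = 1 := by
    rw [hedef, norm_smul, Real.norm_eq_abs, abs_of_pos (inv_pos.2 hL0), ← hLdef,
      inv_mul_cancel₀ hL0.ne']
  set tu : ℝ := ⟪u, e⟫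
  set tv : ℝ := ⟪v, e⟫
  set tw : ℝ := ⟪w, e⟫
  set pu : E3 := u - tu • e with hpu
  set pv : E3 := v - tv • e with hpv
  set pw : E3 := w - tw • e with hpw
  have hwv : w - v = L • e := by
    rw [hedef, smul_smul, mul_inv_cancel₀ hL0.ne', one_smul]
  have htvw : tw - tv = L := by
    have : ⟪w - v, e⟫ = L := by
      rw [hwv, real_inner_smul_left, real_inner_self_eq_norm_sq, he]; ring
    rw [← this, inner_sub_left]
  have hpvw : pv = pw := by
    have h : pw - pv = (w - v) - (tw - tv) • e := by rw [hpw, hpv]; module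
    rw [hwv, htvw] at h
    have h2 : pw - pv = 0 := by rw [h]; module
    symm; exact sub_eq_zero.1 h2
  have ea : ‖u‖^2 = tu^2 + ‖pu‖^2 := decomp u e he
  have eb : ‖v‖^2 = tv^2 + ‖pv‖^2 := decomp v e he
  have ec : ‖w‖^2 = tw^2 + ‖pv‖^2 := by rw [hpvw]; exact decomp w e he
  set d : ℝ := ‖pv‖
  set δ : ℝ := ‖pu - pv‖ with hδdef
  have gap : ∀ x y : E3, ‖x - y‖^2 = (⟪x, e⟫ - ⟪y, e⟫)^2 + ‖(x - ⟪x,e⟫ • e) - (y - ⟪y,e⟫ • e)‖^2 := by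
    intro x y
    have h := decomp (x - y) e he
    rw [inner_sub_left] at h
    have h2 : (x - y) - (⟪x,e⟫ - ⟪y,e⟫) • e = (x - ⟪x,e⟫ • e) - (y - ⟪y,e⟫ • e) := by module
    rw [h2] at h
    exact h
  have sqlt : ∀ x y : E3, ‖w‖ < ‖x - y‖ → ‖w‖^2 < ‖x - y‖^2 := fun x y h => by
    have := pow_lt_pow_left₀ h hc.le (n := 2) (by norm_num)
    exact this
  have guv : ‖w‖^2 < (tu - tv)^2 + δ^2 := by
    have := sqlt u v duv
    rw [gap u v] at this
    exact this
  have guw : ‖w‖^2 < (tu - tw)^2 + δ^2 := by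
    have := sqlt u w duw
    rw [gap u w] at this
    rw [← hpu, ← hpw, ← hpvw] at this
    exact this
  have gvw : ‖w‖^2 < (tv - tw)^2 := by
    have := sqlt v w dvw
    rw [gap v w] at this
    rw [← hpv, ← hpw, ← hpvw] at this
    simpa using this
  have hAeq : twiceArea u v w = δ * L := by
    have h1 : twiceArea u v w = ‖cross3 (u - v) (w - v)‖ := by
      rw [cross_expand, norm_neg]; rfl
    have h2 : u - v = (tu - tv) • e + (pu - pv) := by rw [hpu, hpv]; module
    have h3 : cross3 (u - v) (w - v) = L • cross3 (pu - pv) e := by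
      rw [h2, hwv, cross3_combo]
    have h4 : ⟪pu - pv, e⟫ = 0 := by
      rw [inner_sub_left, hpu, hpv, perp_inner u e he, perp_inner v e he]; ring
    have h5 : ‖cross3 (pu - pv) e‖ = δ := by
      refine eq_of_sq_eq (norm_nonneg _) (norm_nonneg _) ?_
      rw [cross_norm_sq, h4, he]; ring
    rw [h1, h3, norm_smul, Real.norm_eq_abs, abs_of_pos hL0, h5]; ring
  have hAin : δ * |tv - tw| ≤ ε * ‖w‖^2 := by
    have habs : |tv - tw| = L := by
      rw [abs_sub_comm, abs_of_nonneg (by linarith [htvw, hL0] : (0:ℝ) ≤ tw - tv), htvw]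
    rw [habs, ← hAeq]; exact hA
  have hnu : |‖pu‖ - d| ≤ δ := abs_norm_sub_norm_le pu pv
  obtain ⟨H1, H2, H3⟩ := core ε ‖u‖ ‖v‖ ‖w‖ tu tv tw d δ ‖pu‖ hε hε1 hc
    (norm_nonneg u) (norm_nonneg v) hab hbc (norm_nonneg _) (norm_nonneg _) (norm_nonneg _)
    hAin hnu ea eb ec guv guw gvw
  refine ⟨H1, H2, ?_⟩
  have hv : v = tv • e + pv := by rw [hpv]; module
  have hw : w = tw • e + pv := by rw [hpvw, hpw]; module
  have hpv_e : ⟪pv, e⟫ = 0 := perp_inner v e he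
  have he_pv : ⟪e, pv⟫ = 0 := by rw [real_inner_comm]; exact hpv_e
  have hinner : ⟪v, w⟫ = tv * tw + d^2 := by
    conv_lhs => rw [hv, hw]
    simp only [inner_add_left, inner_add_right, real_inner_smul_left, real_inner_smul_right,
      hpv_e, he_pv, real_inner_self_eq_norm_sq, he]
    ring
  rw [hinner]; exact H3

end NeedleLemma

section HullLemmas

lemma inner_linear (n : E3) : IsLinearMap ℝ (fun z : E3 => ⟪z, n⟫) :=
  ⟨fun x y => inner_add_left x y n, fun c x => real_inner_smul_left x n c⟩

lemma hull_inner_le {S : Set E3} {n : E3} {M : ℝ} (h : ∀ x ∈ S, ⟪x, n⟫ ≤ M) :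
    ∀ z ∈ convexHull ℝ S, ⟪z, n⟫ ≤ M :=
  fun z hz => convexHull_min h (convex_halfSpace_le (inner_linear n) M) hz

lemma combo_mem {C : Set E3} (hC : Convex ℝ C) {x y : E3} (hx : x ∈ C) (hy : y ∈ C)
    (hnx : -x ∈ C) (hny : -y ∈ C) (h0 : (0:E3) ∈ C) {α β : ℝ} (hs : |α| + |β| ≤ 1) :
    α • x + β • y ∈ C := by
  set q1 : E3 := if 0 ≤ α then x else -x with hq1def
  set q2 : E3 := if 0 ≤ β then y else -y with hq2def
  have hq1 : q1 ∈ C := by rw [hq1def]; split <;> assumption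
  have hq2 : q2 ∈ C := by rw [hq2def]; split <;> assumption
  have e1 : α • x = |α| • q1 := by
    rw [hq1def]; rcases le_or_gt 0 α with h | h
    · rw [if_pos h, abs_of_nonneg h]
    · rw [if_neg (not_le.2 h), abs_of_neg h, smul_neg, neg_smul, neg_neg]
  have e2 : β • y = |β| • q2 := by
    rw [hq2def]; rcases le_or_gt 0 β with h | h
    · rw [if_pos h, abs_of_nonneg h]
    · rw [if_neg (not_le.2 h), abs_of_neg h, smul_neg, neg_smul, neg_neg]
  have hsum := hC.sum_mem (t := (Finset.univ : Finset (Fin 3)))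
    (w := ![|α|, |β|, 1 - |α| - |β|]) (z := ![q1, q2, 0])
    (by
      intro i _; fin_cases i
      · simp
      · simp
      · simp; linarith [abs_nonneg α, abs_nonneg β])
    (by simp [Fin.sum_univ_three])
    (by intro i _; fin_cases i <;> simp [hq1, hq2, h0])
  rw [Fin.sum_univ_three] at hsum
  simpa [e1, e2] using hsum

lemma cross_parallel {x y Y : E3} (hY : Y ≠ 0) (hxY : ⟪x, Y⟫ = 0) (hyY : ⟪y, Y⟫ = 0) :
    ‖Y‖^2 • cross3 x y = ⟪cross3 x y, Y⟫ • Y := by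
  have h0 : cross3 (cross3 x y) Y = 0 := by
    rw [bac_cab, hxY, hyY]; simp
  have hCS : ‖cross3 x y‖^2 * ‖Y‖^2 - ⟪cross3 x y, Y⟫^2 = 0 := by
    rw [← cross_norm_sq, h0]; simp
  have hdiff : ‖(‖Y‖^2 • cross3 x y) - (⟪cross3 x y, Y⟫ • Y)‖^2 = 0 := by
    rw [norm_sub_sq_real]
    rw [norm_smul, norm_smul, real_inner_smul_left, real_inner_smul_right]
    rw [Real.norm_eq_abs, Real.norm_eq_abs]
    have h1 : (|‖Y‖^2| * ‖cross3 x y‖)^2 = ‖Y‖^4 * ‖cross3 x y‖^2 := by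
      rw [mul_pow, sq_abs]; ring
    have h2 : (|⟪cross3 x y, Y⟫| * ‖Y‖)^2 = ⟪cross3 x y, Y⟫^2 * ‖Y‖^2 := by
      rw [mul_pow, sq_abs]
    rw [h1, h2]
    linear_combination (‖Y‖^2) * hCS
  have := norm_eq_zero.1 (by
    have := sq_eq_zero_iff.1 hdiff
    exact this)
  exact sub_eq_zero.1 this

lemma cramer_decomp {Y x y z : E3} (hY : Y ≠ 0) (hxY : ⟪x, Y⟫ = 0) (hyY : ⟪y, Y⟫ = 0)
    (hzY : ⟪z, Y⟫ = 0) (hD : ‖cross3 x y‖ ≠ 0) :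
    z = ((⟪z,x⟫*‖y‖^2 - ⟪z,y⟫*⟪x,y⟫)/‖cross3 x y‖^2) • x
      + ((⟪z,y⟫*‖x‖^2 - ⟪z,x⟫*⟪x,y⟫)/‖cross3 x y‖^2) • y := by
  set D2 : ℝ := ‖cross3 x y‖^2 with hD2def
  have hD2 : D2 ≠ 0 := pow_ne_zero 2 hD
  have hD2eq : D2 = ‖x‖^2*‖y‖^2 - ⟪x,y⟫^2 := by rw [hD2def, cross_norm_sq]
  set α : ℝ := (⟪z,x⟫*‖y‖^2 - ⟪z,y⟫*⟪x,y⟫)/D2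
  set β : ℝ := (⟪z,y⟫*‖x‖^2 - ⟪z,x⟫*⟪x,y⟫)/D2
  set e : E3 := z - (α • x + β • y) with hedef
  have hαD : α * D2 = ⟪z,x⟫*‖y‖^2 - ⟪z,y⟫*⟪x,y⟫ := div_mul_cancel₀ _ hD2
  have hβD : β * D2 = ⟪z,y⟫*‖x‖^2 - ⟪z,x⟫*⟪x,y⟫ := div_mul_cancel₀ _ hD2
  have hvalx : ⟪z,x⟫ - (α*‖x‖^2 + β*⟪x,y⟫) = 0 := by
    have hmul : (⟪z,x⟫ - (α*‖x‖^2 + β*⟪x,y⟫)) * D2 = 0 := by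
      linear_combination (⟪z,x⟫ : ℝ) * hD2eq + (-(‖x‖^2)) * hαD + (-(⟪x,y⟫ : ℝ)) * hβD
    rcases mul_eq_zero.1 hmul with h | h
    exacts [h, absurd h hD2]
  have hvaly : ⟪z,y⟫ - (α*⟪x,y⟫ + β*‖y‖^2) = 0 := by
    have hmul : (⟪z,y⟫ - (α*⟪x,y⟫ + β*‖y‖^2)) * D2 = 0 := by
      linear_combination (⟪z,y⟫ : ℝ) * hD2eq + (-(⟪x,y⟫ : ℝ)) * hαD + (-(‖y‖^2)) * hβD
    rcases mul_eq_zero.1 hmul with h | h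
    exacts [h, absurd h hD2]
  have hex : ⟪e, x⟫ = 0 := by
    rw [hedef, inner_sub_left, inner_add_left, real_inner_smul_left, real_inner_smul_left,
      real_inner_self_eq_norm_sq, (real_inner_comm y x : ⟪x,y⟫ = ⟪y,x⟫).symm]
    linarith [hvalx]
  have hey : ⟪e, y⟫ = 0 := by
    rw [hedef, inner_sub_left, inner_add_left, real_inner_smul_left, real_inner_smul_left,
      real_inner_self_eq_norm_sq]
    linarith [hvaly]
  have heY : ⟪e, Y⟫ = 0 := by
    rw [hedef, inner_sub_left, inner_add_left, real_inner_smul_left, real_inner_smul_left,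
      hzY, hxY, hyY]
    ring
  have hecxy : ⟪e, cross3 x y⟫ = 0 := by
    have hYn : ‖Y‖^2 ≠ 0 := pow_ne_zero 2 (norm_ne_zero_iff.2 hY)
    have h1 : ‖Y‖^2 * ⟪e, cross3 x y⟫ = ⟪e, ‖Y‖^2 • cross3 x y⟫ := by
      rw [real_inner_smul_right]
    rw [cross_parallel hY hxY hyY, real_inner_smul_right, heY, mul_zero] at h1
    exact (mul_eq_zero.1 h1).resolve_left hYn
  have hbac : cross3 (cross3 x y) e = 0 := by
    rw [bac_cab, show (⟪x,e⟫:ℝ) = 0 from by rw [real_inner_comm]; exact hex,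
      show (⟪y,e⟫:ℝ) = 0 from by rw [real_inner_comm]; exact hey]
    simp
  have hc2 : ⟪cross3 x y, e⟫ = 0 := by rw [real_inner_comm]; exact hecxy
  have he0 : e = 0 := by
    have h := cross_norm_sq (cross3 x y) e
    rw [hbac, hc2] at h
    simp only [norm_zero] at h
    have hne : ‖e‖^2 = 0 := by
      rcases mul_eq_zero.1 (show ‖cross3 x y‖^2 * ‖e‖^2 = 0 by nlinarith [h]) with h2 | h2
      · exact absurd h2 hD2
      · exact h2
    exact norm_eq_zero.1 (pow_eq_zero_iff (by norm_num) |>.1 hne)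
  have h := sub_eq_zero.1 he0
  exact h

end HullLemmas

section ProjLemmas

lemma toR3_sub (a b : Fin 3 → ℤ) : toR3 (a - b) = toR3 a - toR3 b := by
  ext i
  simp [toR3, toE3]

lemma projPl_sub (Y x y : E3) : projPl Y (x - y) = projPl Y x - projPl Y y := by
  simp only [projPl, projL, inner_sub_left, sub_div, sub_smul]
  module

lemma inner_projPl (Y h : E3) (hY : Y ≠ 0) : ⟪projPl Y h, Y⟫ = 0 := by
  have hn : ‖Y‖ ≠ 0 := norm_ne_zero_iff.2 hY
  simp only [projPl, projL, inner_sub_left, real_inner_smul_left,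
    real_inner_self_eq_norm_sq]
  field_simp
  ring

lemma min3_eval (x y z : ℝ) : min3 ![x, y, z] = min x (min y z) := by
  simp [min3]

lemma tA_rot (u v w : E3) : twiceArea v w u = twiceArea u v w := by
  unfold twiceArea; congr 1; abel

lemma tA_swap12 (u v w : E3) : twiceArea u w v = twiceArea u v w := by
  unfold twiceArea
  have h : cross3 u w + cross3 w v + cross3 v u
      = -(cross3 u v + cross3 v w + cross3 w u) := by
    rw [cross3_swap w u, cross3_swap v w, cross3_swap u v]; abel
  rw [h, norm_neg]

lemma tA_perm (p : Fin 3 → E3) (τ : Equiv.Perm (Fin 3)) :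
    twiceArea (p (τ 0)) (p (τ 1)) (p (τ 2)) = twiceArea (p 0) (p 1) (p 2) := by
  have h3 : ∀ m : Fin 3, m = 0 ∨ m = 1 ∨ m = 2 := by decide
  have hne : ∀ i j : Fin 3, i ≠ j → τ i ≠ τ j := fun i j h => fun hc => h (τ.injective hc)
  rcases h3 (τ 0) with h0 | h0 | h0 <;> rcases h3 (τ 1) with h1 | h1 | h1 <;>
    rcases h3 (τ 2) with h2 | h2 | h2 <;>
    first
      | (exact absurd (h0.trans h1.symm) (hne 0 1 (by decide)))
      | (exact absurd (h0.trans h2.symm) (hne 0 2 (by decide)))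
      | (exact absurd (h1.trans h2.symm) (hne 1 2 (by decide)))
      | (rw [h0, h1, h2] <;>
         first
          | rfl
          | exact tA_swap12 _ _ _
          | exact tA_rot _ _ _
          | exact (tA_swap12 _ _ _).trans (tA_rot _ _ _)
          | exact (tA_rot _ _ _).trans (tA_rot _ _ _)
          | exact (tA_swap12 _ _ _).trans ((tA_rot _ _ _).trans (tA_rot _ _ _)))

lemma step_dists (Y : E3) (g g' : Fin 3 → Fin 3 → ℤ) (hst : SVAStep Y g g') (c : ℝ)
    (hmax : ∀ i, ‖colP Y g i‖ ≤ c) (j : Fin 3) (hlt : c < ‖colP Y g' j‖) :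
    c < ‖colP Y g 1 - colP Y g 0‖ ∧ c < ‖colP Y g 2 - colP Y g 1‖ ∧
      c < ‖colP Y g 2 - colP Y g 0‖ := by
  obtain ⟨f, hcase, τ, hτ, -⟩ := hst
  have hgf : ‖colP Y g' j‖ = ‖colP Y f (τ j)‖ := by
    unfold colP; rw [hτ j]
  rw [hgf] at hlt
  have h3 : ∀ m : Fin 3, m = 0 ∨ m = 1 ∨ m = 2 := by decide
  have hd01 : colP Y (fun i => ![g 0, g 1 - g 0, g 2] i) 1 = colP Y g 1 - colP Y g 0 := by
    show projPl Y (toR3 (g 1 - g 0)) = _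
    rw [toR3_sub, projPl_sub]; rfl
  have hd12 : colP Y (fun i => ![g 0, g 1, g 2 - g 1] i) 2 = colP Y g 2 - colP Y g 1 := by
    show projPl Y (toR3 (g 2 - g 1)) = _
    rw [toR3_sub, projPl_sub]; rfl
  have hd02 : colP Y (fun i => ![g 0, g 1, g 2 - g 0] i) 2 = colP Y g 2 - colP Y g 0 := by
    show projPl Y (toR3 (g 2 - g 0)) = _
    rw [toR3_sub, projPl_sub]; rfl
  rw [min3_eval] at hcase
  rcases hcase with ⟨hmin, hf⟩ | ⟨hmin, hf⟩ | ⟨hmin, hf⟩ <;> subst hf <;>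
    rcases h3 (τ j) with hk | hk | hk <;> rw [hk] at hlt
  · exact absurd hlt (not_lt.2 (hmax 0))
  · rw [hd01] at hlt
    exact ⟨hlt,
      hlt.trans_le (hmin.symm.trans_le (le_trans (min_le_right _ _) (min_le_left _ _))),
      hlt.trans_le (hmin.symm.trans_le (le_trans (min_le_right _ _) (min_le_right _ _)))⟩
  · exact absurd hlt (not_lt.2 (hmax 2))
  · exact absurd hlt (not_lt.2 (hmax 0))
  · exact absurd hlt (not_lt.2 (hmax 1))
  · rw [hd12] at hlt
    exact ⟨hlt.trans_le (hmin.symm.trans_le (min_le_left _ _)), hlt,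
      hlt.trans_le (hmin.symm.trans_le (le_trans (min_le_right _ _) (min_le_right _ _)))⟩
  · exact absurd hlt (not_lt.2 (hmax 0))
  · exact absurd hlt (not_lt.2 (hmax 1))
  · rw [hd02] at hlt
    exact ⟨hlt.trans_le (hmin.symm.trans_le (min_le_left _ _)),
      hlt.trans_le (hmin.symm.trans_le (le_trans (min_le_right _ _) (min_le_left _ _))), hlt⟩

end ProjLemmas

section RadiusLemmas

def radSet (Y : E3) (g : Fin 3 → Fin 3 → ℤ) : Set ℝ :=
  {r : ℝ | 0 ≤ r ∧ {y : E3 | (inner ℝ y Y : ℝ) = 0 ∧ ‖y‖ ≤ r} ⊆ hexHull Y g}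

lemma inRadius_eq (Y : E3) (g : Fin 3 → Fin 3 → ℤ) : inRadius Y g = sSup (radSet Y g) := rfl

lemma mem_hex (Y : E3) (g : Fin 3 → Fin 3 → ℤ) (i : Fin 3) : colP Y g i ∈ hexHull Y g := by
  apply subset_convexHull
  fin_cases i <;> simp

lemma neg_mem_hex (Y : E3) (g : Fin 3 → Fin 3 → ℤ) (i : Fin 3) :
    -colP Y g i ∈ hexHull Y g := by
  apply subset_convexHull
  fin_cases i <;> simp

lemma zero_mem_hex (Y : E3) (g : Fin 3 → Fin 3 → ℤ) : (0:E3) ∈ hexHull Y g := by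
  have h := (convex_convexHull ℝ _) (mem_hex Y g 0) (neg_mem_hex Y g 0)
    (by norm_num : (0:ℝ) ≤ 1/2) (by norm_num : (0:ℝ) ≤ 1/2) (by norm_num)
  simpa [hexHull] using h

lemma zero_mem_radSet (Y : E3) (g : Fin 3 → Fin 3 → ℤ) : (0:ℝ) ∈ radSet Y g := by
  refine ⟨le_refl 0, fun y hy => ?_⟩
  have : y = 0 := norm_le_zero_iff.1 hy.2
  rw [this]; exact zero_mem_hex Y g

lemma rad_le (Y : E3) (g : Fin 3 → Fin 3 → ℤ) (n : E3) (hn : n ≠ 0)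
    (hnY : ⟪n, Y⟫ = 0) (M : ℝ) (hM : ∀ i, |⟪colP Y g i, n⟫| ≤ M * ‖n‖) :
    ∀ r ∈ radSet Y g, r ≤ M := by
  intro r hr
  obtain ⟨hr0, hsub⟩ := hr
  have hnn : 0 < ‖n‖ := norm_pos_iff.2 hn
  set y : E3 := (r/‖n‖) • n with hydef
  have hyY : ⟪y, n⟫ = r * ‖n‖ := by
    rw [hydef, real_inner_smul_left, real_inner_self_eq_norm_sq]
    field_simp
  have hymem : y ∈ hexHull Y g := by
    apply hsub
    constructor
    · rw [hydef, real_inner_smul_left, hnY, mul_zero]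
    · rw [hydef, norm_smul, Real.norm_eq_abs, abs_of_nonneg (by positivity)]
      rw [div_mul_cancel₀ _ hnn.ne']
  have hhalf : ∀ x ∈ ({colP Y g 0, colP Y g 1, colP Y g 2,
      -colP Y g 0, -colP Y g 1, -colP Y g 2} : Set E3), ⟪x, n⟫ ≤ M * ‖n‖ := by
    intro x hx
    simp only [Set.mem_insert_iff, Set.mem_singleton_iff] at hx
    rcases hx with h|h|h|h|h|h <;> subst h
    · exact le_trans (le_abs_self _) (hM 0)
    · exact le_trans (le_abs_self _) (hM 1)
    · exact le_trans (le_abs_self _) (hM 2)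
    · rw [inner_neg_left]; exact le_trans (neg_le_abs _) (hM 0)
    · rw [inner_neg_left]; exact le_trans (neg_le_abs _) (hM 1)
    · rw [inner_neg_left]; exact le_trans (neg_le_abs _) (hM 2)
  have := hull_inner_le hhalf y hymem
  rw [hyY] at this
  exact le_of_mul_le_mul_right this hnn

lemma rad_mem_pair (Y : E3) (g : Fin 3 → Fin 3 → ℤ) (hY : Y ≠ 0) (i j : Fin 3) (c : ℝ)
    (hc : 0 < c) (hmax : ∀ k, ‖colP Y g k‖ ≤ c) :
    ‖cross3 (colP Y g i) (colP Y g j)‖^2/(4*c^3) ∈ radSet Y g := by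
  set x := colP Y g i with hxdef
  set y := colP Y g j with hydef
  set r : ℝ := ‖cross3 x y‖^2/(4*c^3) with hrdef
  have hr0 : 0 ≤ r := by positivity
  refine ⟨hr0, fun z hz => ?_⟩
  obtain ⟨hzY, hzr⟩ := hz
  by_cases hD : ‖cross3 x y‖ = 0
  · have : r = 0 := by rw [hrdef, hD]; simp
    rw [this] at hzr
    have : z = 0 := norm_le_zero_iff.1 hzr
    rw [this]; exact zero_mem_hex Y g
  · have hD2pos : 0 < ‖cross3 x y‖^2 := by positivity
    have hxY : ⟪x, Y⟫ = 0 := inner_projPl Y _ hY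
    have hyY : ⟪y, Y⟫ = 0 := inner_projPl Y _ hY
    have hzdec := cramer_decomp hY hxY hyY hzY hD
    set D2 : ℝ := ‖cross3 x y‖^2 with hD2def
    set α : ℝ := (⟪z,x⟫*‖y‖^2 - ⟪z,y⟫*⟪x,y⟫)/D2 with hαdef
    set β : ℝ := (⟪z,y⟫*‖x‖^2 - ⟪z,x⟫*⟪x,y⟫)/D2 with hβdef
    have hzx : |⟪z,x⟫| ≤ r * c :=
      le_trans (abs_real_inner_le_norm z x)
        (mul_le_mul hzr (hmax i) (norm_nonneg _) hr0)
    have hzy : |⟪z,y⟫| ≤ r * c :=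
      le_trans (abs_real_inner_le_norm z y)
        (mul_le_mul hzr (hmax j) (norm_nonneg _) hr0)
    have hxy : |⟪x,y⟫| ≤ c * c :=
      le_trans (abs_real_inner_le_norm x y)
        (mul_le_mul (hmax i) (hmax j) (norm_nonneg _) hc.le)
    have hy2 : ‖y‖^2 ≤ c^2 := by nlinarith [hmax j, norm_nonneg y]
    have hx2 : ‖x‖^2 ≤ c^2 := by nlinarith [hmax i, norm_nonneg x]
    have hN1 : |⟪z,x⟫*‖y‖^2 - ⟪z,y⟫*⟪x,y⟫| ≤ 2*(r*c^3) := by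
      have h1 := abs_sub (⟪z,x⟫*‖y‖^2) (⟪z,y⟫*⟪x,y⟫)
      rw [abs_mul, abs_mul] at h1
      have h2 : |⟪z,x⟫| * |‖y‖^2| ≤ (r*c)*c^2 := by
        rw [abs_of_nonneg (sq_nonneg ‖y‖)]
        exact mul_le_mul hzx hy2 (sq_nonneg _) (by positivity)
      have h3 : |⟪z,y⟫| * |⟪x,y⟫| ≤ (r*c)*(c*c) := by
        exact mul_le_mul hzy hxy (abs_nonneg _) (by positivity)
      nlinarith [h1, h2, h3]
    have hN2 : |⟪z,y⟫*‖x‖^2 - ⟪z,x⟫*⟪x,y⟫| ≤ 2*(r*c^3) := by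
      have h1 := abs_sub (⟪z,y⟫*‖x‖^2) (⟪z,x⟫*⟪x,y⟫)
      rw [abs_mul, abs_mul] at h1
      have h2 : |⟪z,y⟫| * |‖x‖^2| ≤ (r*c)*c^2 := by
        rw [abs_of_nonneg (sq_nonneg ‖x‖)]
        exact mul_le_mul hzy hx2 (sq_nonneg _) (by positivity)
      have h3 : |⟪z,x⟫| * |⟪x,y⟫| ≤ (r*c)*(c*c) := by
        exact mul_le_mul hzx hxy (abs_nonneg _) (by positivity)
      nlinarith [h1, h2, h3]
    have hrD2 : 4*(r*c^3) = D2 := by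
      rw [hrdef]; field_simp
    have hα : |α| ≤ 1/2 := by
      rw [hαdef, abs_div, abs_of_pos hD2pos]
      rw [div_le_iff₀ hD2pos]
      nlinarith [hN1]
    have hβ : |β| ≤ 1/2 := by
      rw [hβdef, abs_div, abs_of_pos hD2pos]
      rw [div_le_iff₀ hD2pos]
      nlinarith [hN2]
    rw [hzdec]
    exact combo_mem (convex_convexHull ℝ _) (mem_hex Y g i) (mem_hex Y g j)
      (neg_mem_hex Y g i) (neg_mem_hex Y g j) (zero_mem_hex Y g) (by linarith)

end RadiusLemmas

section GlueLemmas

lemma sin_le' {x : ℝ} (h : 0 ≤ x) : Real.sin x ≤ x := by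
  rcases h.eq_or_lt with h' | h'
  · rw [← h']; simp
  · exact (Real.sin_lt h').le

lemma sorted_max (p : Fin 3 → E3) (τ : Equiv.Perm (Fin 3))
    (h1 : ‖p (τ 0)‖ ≤ ‖p (τ 1)‖) (h2 : ‖p (τ 1)‖ ≤ ‖p (τ 2)‖) :
    ∀ i, ‖p i‖ ≤ ‖p (τ 2)‖ := by
  intro i
  obtain ⟨k, hk⟩ : ∃ k, τ k = i := ⟨τ.symm i, τ.apply_symm_apply i⟩
  rw [← hk]
  rcases (by decide : ∀ m : Fin 3, m = 0 ∨ m = 1 ∨ m = 2) k with h | h | h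
  · rw [h]; exact le_trans h1 h2
  · rw [h]; exact h2
  · rw [h]

lemma all_dists (p : Fin 3 → E3) (c : ℝ) (h01 : c < ‖p 1 - p 0‖)
    (h12 : c < ‖p 2 - p 1‖) (h02 : c < ‖p 2 - p 0‖) :
    ∀ i j, i ≠ j → c < ‖p i - p j‖ := by
  intro i j hij
  fin_cases i <;> fin_cases j <;>
    first
      | (exact absurd rfl hij)
      | exact h01
      | exact h12
      | exact h02
      | (rw [norm_sub_rev]
         first
          | exact h01
          | exact h12
          | exact h02)

lemma cross_eq_sin (v w : E3) :
    ‖cross3 w v‖ = Real.sin (InnerProductGeometry.angle v w) * (‖v‖ * ‖w‖) := by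
  rw [InnerProductGeometry.sin_angle_mul_norm_mul_norm]
  rw [← Real.sqrt_sq (norm_nonneg (cross3 w v))]
  congr 1
  rw [cross_norm_sq, real_inner_self_eq_norm_sq, real_inner_self_eq_norm_sq,
    real_inner_comm w v]
  ring

lemma rad_basic (Y : E3) (hY : Y ≠ 0) (g : Fin 3 → Fin 3 → ℤ) (k : Fin 3)
    (hc : 0 < ‖colP Y g k‖) (hmax : ∀ i, ‖colP Y g i‖ ≤ ‖colP Y g k‖) :
    BddAbove (radSet Y g) ∧ 0 ≤ inRadius Y g := by
  set w := colP Y g k with hw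
  set n := cross3 Y w with hn
  have hwY : ⟪w, Y⟫ = 0 := inner_projPl Y _ hY
  have hYw : ⟪Y, w⟫ = 0 := by rw [real_inner_comm]; exact hwY
  have hnn : ‖n‖ = ‖Y‖*‖w‖ :=
    eq_of_sq_eq (norm_nonneg _) (by positivity)
      (by rw [hn, cross_norm_sq, hYw]; ring)
  have hn0 : n ≠ 0 := by
    intro h
    rw [h, norm_zero] at hnn
    have : 0 < ‖Y‖*‖w‖ := mul_pos (norm_pos_iff.2 hY) hc
    linarith
  have hnY : ⟪n, Y⟫ = 0 := by rw [hn]; exact inner_cross_left Y w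
  have hM : ∀ i, |⟪colP Y g i, n⟫| ≤ ‖w‖ * ‖n‖ := fun i =>
    le_trans (abs_real_inner_le_norm _ _)
      (mul_le_mul_of_nonneg_right (hmax i) (norm_nonneg n))
  have hbdd : BddAbove (radSet Y g) := ⟨‖w‖, fun r hr => rad_le Y g n hn0 hnY ‖w‖ hM r hr⟩
  exact ⟨hbdd, le_csSup hbdd (zero_mem_radSet Y g)⟩

lemma rad_upper (Y : E3) (hY : Y ≠ 0) (g : Fin 3 → Fin 3 → ℤ) (τ : Equiv.Perm (Fin 3))
    (hc : 0 < ‖colP Y g (τ 2)‖)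
    (h01 : ‖colP Y g (τ 0)‖ ≤ ‖colP Y g (τ 1)‖)
    (h12 : ‖colP Y g (τ 1)‖ ≤ ‖colP Y g (τ 2)‖) :
    inRadius Y g ≤ ‖colP Y g (τ 0)‖ + ‖colP Y g (τ 2)‖ *
      Real.sin (InnerProductGeometry.angle (colP Y g (τ 1)) (colP Y g (τ 2))) := by
  set u := colP Y g (τ 0) with hu
  set v := colP Y g (τ 1) with hv
  set w := colP Y g (τ 2) with hw
  set θ := InnerProductGeometry.angle v w with hθ
  set M : ℝ := ‖u‖ + ‖w‖ * Real.sin θ with hM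
  have hsin0 : 0 ≤ Real.sin θ :=
    Real.sin_nonneg_of_nonneg_of_le_pi (InnerProductGeometry.angle_nonneg v w)
      (InnerProductGeometry.angle_le_pi v w)
  have hM0 : 0 ≤ M := by
    rw [hM]
    exact add_nonneg (norm_nonneg u) (mul_nonneg (norm_nonneg w) hsin0)
  have hwY : ⟪w, Y⟫ = 0 := inner_projPl Y _ hY
  have hYw : ⟪Y, w⟫ = 0 := by rw [real_inner_comm]; exact hwY
  set n := cross3 Y w with hn
  have hnn : ‖n‖ = ‖Y‖*‖w‖ :=
    eq_of_sq_eq (norm_nonneg _) (by positivity)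
      (by rw [hn, cross_norm_sq, hYw]; ring)
  have hn0 : n ≠ 0 := by
    intro h
    rw [h, norm_zero] at hnn
    have : 0 < ‖Y‖*‖w‖ := mul_pos (norm_pos_iff.2 hY) hc
    linarith
  have hnY : ⟪n, Y⟫ = 0 := by rw [hn]; exact inner_cross_left Y w
  have hMi : ∀ i, |⟪colP Y g i, n⟫| ≤ M * ‖n‖ := by
    intro i
    obtain ⟨kk, hkk⟩ : ∃ kk, τ kk = i := ⟨τ.symm i, τ.apply_symm_apply i⟩
    rw [← hkk]
    rcases (by decide : ∀ m : Fin 3, m = 0 ∨ m = 1 ∨ m = 2) kk with h | h | h <;> rw [h]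
    · refine le_trans (abs_real_inner_le_norm _ _) ?_
      refine mul_le_mul_of_nonneg_right ?_ (norm_nonneg n)
      rw [hM]
      nlinarith [mul_nonneg (norm_nonneg w) hsin0]
    · have t1 : ⟪v, n⟫ = ⟪cross3 w v, Y⟫ := by
        rw [hn, real_inner_comm]
        exact inner_cross_cycle Y w v
      rw [show colP Y g (τ 1) = v from rfl, t1]
      refine le_trans (abs_real_inner_le_norm _ _) ?_
      rw [cross_eq_sin v w, hnn, hM, ← hθ]
      nlinarith [mul_le_mul_of_nonneg_left h12 hsin0,
        mul_nonneg (mul_nonneg (norm_nonneg u) (norm_nonneg Y)) (norm_nonneg w),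
        mul_nonneg (mul_nonneg (mul_nonneg hsin0 (norm_nonneg Y)) (norm_nonneg w))
          (sub_nonneg.2 h12), norm_nonneg Y, norm_nonneg w]
    · have t2 : ⟪w, n⟫ = 0 := by
        rw [hn, real_inner_comm]; exact inner_cross_right Y w
      rw [show colP Y g (τ 2) = w from rfl, t2]
      simpa using mul_nonneg hM0 (norm_nonneg n)
  rw [inRadius_eq]
  exact csSup_le ⟨0, zero_mem_radSet Y g⟩ (fun r hr => rad_le Y g n hn0 hnY M hMi r hr)

lemma rad_lower (Y : E3) (hY : Y ≠ 0) (g : Fin 3 → Fin 3 → ℤ) (k : Fin 3) (i j : Fin 3)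
    (hc : 0 < ‖colP Y g k‖) (hmax : ∀ m, ‖colP Y g m‖ ≤ ‖colP Y g k‖) :
    ‖cross3 (colP Y g i) (colP Y g j)‖^2 ≤ 4*‖colP Y g k‖^3 * inRadius Y g := by
  have hb := (rad_basic Y hY g k hc hmax).1
  have hm := le_csSup hb (rad_mem_pair Y g hY i j ‖colP Y g k‖ hc hmax)
  rw [← inRadius_eq] at hm
  rw [div_le_iff₀ (by positivity)] at hm
  nlinarith [hm]

lemma ratio_sqrt {D ρ c : ℝ} (hD0 : 0 ≤ D) (hc : 0 < c) (hρ0 : 0 ≤ ρ)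
    (h : D^2 ≤ 4*c^3*ρ) : D/c^2 ≤ 2*Real.sqrt (ρ/c) := by
  have h1 : (D/c^2)^2 ≤ 4*(ρ/c) := by
    rw [div_pow, div_le_iff₀ (by positivity)]
    calc D^2 ≤ 4*c^3*ρ := h
    _ = 4*(ρ/c)*(c^2)^2 := by field_simp
  have h2 : Real.sqrt ((D/c^2)^2) ≤ Real.sqrt (4*(ρ/c)) := Real.sqrt_le_sqrt h1
  rw [Real.sqrt_sq (by positivity)] at h2
  calc D/c^2 ≤ Real.sqrt (4*(ρ/c)) := h2
  _ = 2*Real.sqrt (ρ/c) := by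
    rw [show (4:ℝ)*(ρ/c) = 2^2*(ρ/c) from by norm_num,
      Real.sqrt_mul (by positivity), Real.sqrt_sq (by norm_num)]

end GlueLemmas

/-- Lemma: needling triangles. -/
theorem sva_needling_triangles (Y : E3) (h0 : 0 < Y 0) (h01 : Y 0 < Y 1) (h12 : Y 1 < Y 2)
    (hind : LinearIndependent ℚ fun i : Fin 3 => Y i)
    (g : ℕ → Fin 3 → Fin 3 → ℤ) (hg : IsSVARun Y g)
    (σ : ℕ → Equiv.Perm (Fin 3))
    (hσ : ∀ s, ‖colP Y (g s) (σ s 0)‖ ≤ ‖colP Y (g s) (σ s 1)‖ ∧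
               ‖colP Y (g s) (σ s 1)‖ ≤ ‖colP Y (g s) (σ s 2)‖)
    (T : Set ℕ) (hT : T = {s | ‖colP Y (g s) (σ s 2)‖ < ‖colP Y (g (s + 1)) (σ (s + 1) 2)‖}) :
    List.TFAE
      [ -- a)
        Filter.Tendsto
          (fun s => twiceArea (colP Y (g s) 0) (colP Y (g s) 1) (colP Y (g s) 2)
            / ‖colP Y (g s) (σ s 2)‖ ^ 2)
          (Filter.atTop ⊓ Filter.principal T) (nhds 0),
        -- b)
        Filter.Tendsto (fun s => inRadius Y (g s) / ‖colP Y (g s) (σ s 2)‖)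
          (Filter.atTop ⊓ Filter.principal T) (nhds 0),
        -- c)
        Filter.Tendsto
          (fun s => ‖colP Y (g s) (σ s 0)‖ / ‖colP Y (g s) (σ s 1)‖ +
            (Real.pi - InnerProductGeometry.angle (colP Y (g s) (σ s 1)) (colP Y (g s) (σ s 2))))
          (Filter.atTop ⊓ Filter.principal T) (nhds 0) ] := by
  classical
  have hY : Y ≠ 0 := by
    intro h
    rw [h] at h0
    simp only [show ((0:E3) 0 : ℝ) = 0 from rfl] at h0
    exact lt_irrefl 0 h0
  have hTev : ∀ᶠ s in (Filter.atTop ⊓ Filter.principal T), s ∈ T :=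
    Filter.eventually_inf_principal.mpr (Filter.Eventually.of_forall fun s hs => hs)
  have key : ∀ s, s ∈ T →
      0 < ‖colP Y (g s) (σ s 2)‖ ∧
      (∀ i, ‖colP Y (g s) i‖ ≤ ‖colP Y (g s) (σ s 2)‖) ∧
      (∀ i j, i ≠ j → ‖colP Y (g s) (σ s 2)‖ < ‖colP Y (g s) i - colP Y (g s) j‖) := by
    intro s hs
    have hmax : ∀ i, ‖colP Y (g s) i‖ ≤ ‖colP Y (g s) (σ s 2)‖ :=
      sorted_max (colP Y (g s)) (σ s) (hσ s).1 (hσ s).2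
    have hlt : ‖colP Y (g s) (σ s 2)‖ < ‖colP Y (g (s+1)) (σ (s+1) 2)‖ := by
      rw [hT] at hs; exact hs
    obtain ⟨h01, h12, h02⟩ :=
      step_dists Y (g s) (g (s+1)) (hg.2 s) ‖colP Y (g s) (σ s 2)‖ hmax (σ (s+1) 2) hlt
    have hc : 0 < ‖colP Y (g s) (σ s 2)‖ := by
      have hns := norm_sub_le (colP Y (g s) 1) (colP Y (g s) 0)
      have m0 := hmax 0; have m1 := hmax 1
      linarith
    exact ⟨hc, hmax, all_dists (colP Y (g s)) _ h01 h12 h02⟩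
  tfae_have 1 → 3 := by
    intro h1
    rw [Metric.tendsto_nhds]
    intro ε hε
    set ε' : ℝ := min (ε/13) (1/10) with hε'def
    have hε'pos : 0 < ε' := lt_min (by positivity) (by norm_num)
    have hε'le : ε' ≤ 1/10 := min_le_right _ _
    have hε'ε : ε' ≤ ε/13 := min_le_left _ _
    have hev := Metric.tendsto_nhds.1 h1 ε' hε'pos
    filter_upwards [hev, hTev] with s hs1 hs2
    obtain ⟨hc, hmax, hdist⟩ := key s hs2
    set p := colP Y (g s) with hpdef
    set u := p (σ s 0) with hudef
    set v := p (σ s 1) with hvdef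
    set w := p (σ s 2) with hwdef
    have hab : ‖u‖ ≤ ‖v‖ := (hσ s).1
    have hbc : ‖v‖ ≤ ‖w‖ := (hσ s).2
    have duv := hdist (σ s 0) (σ s 1) (fun hh => absurd ((σ s).injective hh) (by decide))
    have duw := hdist (σ s 0) (σ s 2) (fun hh => absurd ((σ s).injective hh) (by decide))
    have dvw := hdist (σ s 1) (σ s 2) (fun hh => absurd ((σ s).injective hh) (by decide))
    have hAeq := tA_perm p (σ s)
    rw [Real.dist_eq, sub_zero] at hs1
    have hA2 : twiceArea (p 0) (p 1) (p 2) / ‖w‖^2 < ε' := lt_of_abs_lt hs1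
    have hw2 : (0:ℝ) < ‖w‖^2 := by positivity
    rw [div_lt_iff₀ hw2] at hA2
    have hAle : twiceArea u v w ≤ ε' * ‖w‖^2 := by
      rw [hudef, hvdef, hwdef, hAeq]
      linarith
    obtain ⟨H1, H2, H3⟩ := needle u v w ε' hε'pos hε'le hab hbc hc duv duw dvw hAle
    have hε2 : ε'^2 ≤ 1/100 := by nlinarith
    have hbpos : 0 < ‖v‖ := lt_of_lt_of_le (by nlinarith : (0:ℝ) < ‖w‖*(1-2*ε'^2)) H2
    have hratio : ‖u‖/‖v‖ ≤ 5*ε' := by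
      rw [div_le_iff₀ hbpos]
      nlinarith [mul_le_mul_of_nonneg_left H2 (by positivity : (0:ℝ) ≤ 5*ε'),
        mul_nonneg (mul_pos hc hε'pos).le (by nlinarith : (0:ℝ) ≤ 1 - 10*ε'^2)]
    set θ := InnerProductGeometry.angle v w with hθdef
    have hθ0 : 0 ≤ θ := InnerProductGeometry.angle_nonneg v w
    have hθπ : θ ≤ Real.pi := InnerProductGeometry.angle_le_pi v w
    have hX0 : (0:ℝ) ≤ 1 - 8*ε'^2 := by nlinarith
    have hcos : Real.cos θ ≤ -(1 - 8*ε'^2) := by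
      rw [hθdef, InnerProductGeometry.cos_angle,
        div_le_iff₀ (by positivity : (0:ℝ) < ‖v‖*‖w‖)]
      nlinarith [H3, mul_le_mul_of_nonneg_right hbc hc.le]
    have hcosneg : Real.cos θ < 0 := by nlinarith
    have hθhalf : Real.pi/2 ≤ θ := by
      by_contra hcon
      push_neg at hcon
      have : 0 ≤ Real.cos θ :=
        Real.cos_nonneg_of_mem_Icc ⟨by linarith [Real.pi_pos], hcon.le⟩
      linarith
    have hsin0 : 0 ≤ Real.sin θ := Real.sin_nonneg_of_nonneg_of_le_pi hθ0 hθπ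
    have hsinsq : Real.sin θ^2 = 1 - Real.cos θ^2 := Real.sin_sq θ
    have hcossq : (1-8*ε'^2)^2 ≤ Real.cos θ^2 := hlp_negsq hX0 hcos
    have hsin : Real.sin θ ≤ 4*ε' := by
      nlinarith [hsinsq, hcossq, hsin0, hε'pos, sq_nonneg (Real.sin θ + 4*ε'),
        sq_nonneg (Real.sin θ - 4*ε')]
    have hx1 : 0 ≤ Real.pi - θ := by linarith
    have hx2 : Real.pi - θ ≤ Real.pi/2 := by linarith
    have j1 : 2/Real.pi*(Real.pi - θ) ≤ Real.sin θ := by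
      rw [← Real.sin_pi_sub]
      exact Real.mul_le_sin hx1 hx2
    have hπpos := Real.pi_pos
    have j2 : 2*(Real.pi - θ) ≤ Real.sin θ * Real.pi := by
      rw [div_mul_eq_mul_div, div_le_iff₀ hπpos] at j1
      linarith
    have hπθ : Real.pi - θ ≤ 7*ε' := by
      nlinarith [mul_le_mul hsin Real.pi_lt_d2.le hπpos.le
        (by positivity : (0:ℝ) ≤ 4*ε'), j2]
    rw [Real.dist_eq, sub_zero, abs_of_nonneg
      (add_nonneg (div_nonneg (norm_nonneg u) (norm_nonneg v)) hx1)]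
    calc ‖u‖/‖v‖ + (Real.pi - θ) ≤ 5*ε' + 7*ε' := add_le_add hratio hπθ
    _ = 12*ε' := by ring
    _ ≤ 12*(ε/13) := by linarith
    _ < ε := by linarith
  tfae_have 3 → 2 := by
    intro h3
    apply squeeze_zero' ?_ ?_ h3
    · filter_upwards [hTev] with s hs
      obtain ⟨hc, hmax, hdist⟩ := key s hs
      exact div_nonneg (rad_basic Y hY (g s) (σ s 2) hc hmax).2 (norm_nonneg _)
    · filter_upwards [hTev] with s hs
      obtain ⟨hc, hmax, hdist⟩ := key s hs
      have hρle := rad_upper Y hY (g s) (σ s) hc (hσ s).1 (hσ s).2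
      have duv := hdist (σ s 0) (σ s 1) (fun hh => absurd ((σ s).injective hh) (by decide))
      have hb2 : 0 < ‖colP Y (g s) (σ s 1)‖ := by
        have hns := norm_sub_le (colP Y (g s) (σ s 0)) (colP Y (g s) (σ s 1))
        have h01 := (hσ s).1
        linarith
      set u := colP Y (g s) (σ s 0) with hudef
      set v := colP Y (g s) (σ s 1) with hvdef
      set w := colP Y (g s) (σ s 2) with hwdef
      set θ := InnerProductGeometry.angle v w with hθdef
      have hθπ : θ ≤ Real.pi := InnerProductGeometry.angle_le_pi v w
      have hsinle : Real.sin θ ≤ Real.pi - θ := by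
        rw [← Real.sin_pi_sub]; exact sin_le' (by linarith)
      rw [div_le_iff₀ hc]
      have key1 : ‖u‖ ≤ ‖u‖/‖v‖*‖w‖ := by
        rw [div_mul_eq_mul_div, le_div_iff₀ hb2]
        exact mul_le_mul_of_nonneg_left (hσ s).2 (norm_nonneg u)
      have key2 : ‖w‖*Real.sin θ ≤ ‖w‖*(Real.pi - θ) :=
        mul_le_mul_of_nonneg_left hsinle hc.le
      nlinarith [hρle, key1, key2]
  tfae_have 2 → 1 := by
    intro h2
    have hsq : Filter.Tendsto (fun t : ℝ => 6*Real.sqrt t) (nhds 0) (nhds 0) := by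
      have h := (Real.continuous_sqrt.tendsto 0).const_mul 6
      simpa using h
    apply squeeze_zero' ?_ ?_ (hsq.comp h2)
    · exact Filter.Eventually.of_forall fun s => div_nonneg (norm_nonneg _) (sq_nonneg _)
    · filter_upwards [hTev] with s hs
      obtain ⟨hc, hmax, hdist⟩ := key s hs
      have hρ0 : 0 ≤ inRadius Y (g s) := (rad_basic Y hY (g s) (σ s 2) hc hmax).2
      have h01 := ratio_sqrt (norm_nonneg _) hc hρ0
        (rad_lower Y hY (g s) (σ s 2) 0 1 hc hmax)
      have h12 := ratio_sqrt (norm_nonneg _) hc hρ0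
        (rad_lower Y hY (g s) (σ s 2) 1 2 hc hmax)
      have h20 := ratio_sqrt (norm_nonneg _) hc hρ0
        (rad_lower Y hY (g s) (σ s 2) 2 0 hc hmax)
      have hsum : twiceArea (colP Y (g s) 0) (colP Y (g s) 1) (colP Y (g s) 2)
          ≤ ‖cross3 (colP Y (g s) 0) (colP Y (g s) 1)‖
            + ‖cross3 (colP Y (g s) 1) (colP Y (g s) 2)‖
            + ‖cross3 (colP Y (g s) 2) (colP Y (g s) 0)‖ := norm_add₃_le
      simp only [Function.comp_apply]
      have hdiv : twiceArea (colP Y (g s) 0) (colP Y (g s) 1) (colP Y (g s) 2)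
            / ‖colP Y (g s) (σ s 2)‖^2
          ≤ (‖cross3 (colP Y (g s) 0) (colP Y (g s) 1)‖
            + ‖cross3 (colP Y (g s) 1) (colP Y (g s) 2)‖
            + ‖cross3 (colP Y (g s) 2) (colP Y (g s) 0)‖)
            / ‖colP Y (g s) (σ s 2)‖^2 := by
        apply div_le_div_of_nonneg_right hsum (by positivity)
      rw [add_div, add_div] at hdiv
      calc twiceArea (colP Y (g s) 0) (colP Y (g s) 1) (colP Y (g s) 2)
          / ‖colP Y (g s) (σ s 2)‖^2 ≤ _ := hdiv
      _ ≤ 2*Real.sqrt (inRadius Y (g s) / ‖colP Y (g s) (σ s 2)‖)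
          + 2*Real.sqrt (inRadius Y (g s) / ‖colP Y (g s) (σ s 2)‖)
          + 2*Real.sqrt (inRadius Y (g s) / ‖colP Y (g s) (σ s 2)‖) := by
        gcongr
      _ = 6*Real.sqrt (inRadius Y (g s) / ‖colP Y (g s) (σ s 2)‖) := by ring
  tfae_finish

end
end

section
/- Let X ∈ ℝ³ have coordinates linearly independent over ℚ, and let (P⁽ˢ⁾)_{s∈ℕ} be a sequence of 3×3 integer matrices all having the same determinant up to sign: det(P⁽ˢ⁾) = ε⁽ˢ⁾·D with D > 0 and ε⁽ˢ⁾ ∈ {−1, 1}. Let (P⁽ˢ⁾)* denote the polar matrix of P⁽ˢ⁾ (the transpose of its inverse). If the columns of the matrices P⁽ˢ⁾ have the max-Dirichlet property for the plane P = X^⊥, then the columns of the integer matrices D·(P⁽ˢ⁾)* have the max-Dirichlet property for the line D = ℝ·X. -/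
open Filter InnerProductGeometry Polynomial

noncomputable section

/-- The max-Dirichlet property of a sequence of triples of vectors, for the plane `X^⊥`. -/
def MaxDirichletPlane (X : E3) (p : ℕ → Fin 3 → E3) : Prop :=
  ∃ S : Set ℕ, S.Infinite ∧
    (∃ Cb : ℝ, ∀ s ∈ S,
      (max3 fun i => ‖projPl X (p s i)‖) ^ 2 * (max3 fun i => ‖projL X (p s i)‖) ≤ Cb) ∧
    Filter.Tendsto (fun s => max3 fun i => ‖projL X (p s i)‖)
      (Filter.atTop ⊓ Filter.principal S) (nhds 0)

/-- The max-Dirichlet property of a sequence of triples of vectors, for the line `ℝ·X`. -/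
def MaxDirichletLine (X : E3) (p : ℕ → Fin 3 → E3) : Prop :=
  ∃ S : Set ℕ, S.Infinite ∧
    (∃ Cb : ℝ, ∀ s ∈ S,
      (max3 fun i => ‖projPl X (p s i)‖) ^ 2 * (max3 fun i => ‖projL X (p s i)‖) ≤ Cb) ∧
    Filter.Tendsto (fun s => max3 fun i => ‖projPl X (p s i)‖)
      (Filter.atTop ⊓ Filter.principal S) (nhds 0)

open Matrix

lemma inner_toE3 (v w : Fin 3 → ℝ) : (inner ℝ (toE3 v) (toE3 w) : ℝ) = v ⬝ᵥ w := by
  simp [toE3, PiLp.inner_apply, dotProduct, mul_comm]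

lemma toE3_smul (c : ℝ) (v : Fin 3 → ℝ) : toE3 (c • v) = c • toE3 v := rfl
lemma toE3_add (v w : Fin 3 → ℝ) : toE3 (v + w) = toE3 v + toE3 w := rfl
lemma toE3_sub (v w : Fin 3 → ℝ) : toE3 (v - w) = toE3 v - toE3 w := rfl
lemma toE3_eta (Y : E3) : toE3 (fun i => Y i) = Y := rfl

lemma norm_toE3_sq (v : Fin 3 → ℝ) : ‖toE3 v‖ ^ 2 = v ⬝ᵥ v := by
  rw [← real_inner_self_eq_norm_sq, inner_toE3]

lemma norm_toE3 (v : Fin 3 → ℝ) : ‖toE3 v‖ = Real.sqrt (v ⬝ᵥ v) := by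
  rw [← norm_toE3_sq, Real.sqrt_sq (norm_nonneg _)]

lemma dot_self_pos {y : Fin 3 → ℝ} (hy : y ≠ 0) : 0 < y ⬝ᵥ y := by
  rcases lt_or_eq_of_le (Finset.sum_nonneg fun i _ => mul_self_nonneg (y i)) with h | h
  · exact h
  · exact absurd (dotProduct_self_eq_zero.mp h.symm) hy

lemma projL_toE3 (y a : Fin 3 → ℝ) :
    projL (toE3 y) (toE3 a) = toE3 (((a ⬝ᵥ y) / (y ⬝ᵥ y)) • y) := by
  rw [projL, toE3_smul, inner_toE3, norm_toE3_sq]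

lemma projPl_toE3 (y a : Fin 3 → ℝ) :
    projPl (toE3 y) (toE3 a) = toE3 (a - ((a ⬝ᵥ y) / (y ⬝ᵥ y)) • y) := by
  rw [projPl, projL_toE3, toE3_sub]

lemma lagrange (a b : Fin 3 → ℝ) :
    (crossProduct a b) ⬝ᵥ (crossProduct a b) = (a ⬝ᵥ a) * (b ⬝ᵥ b) - (a ⬝ᵥ b) ^ 2 := by
  simp [cross_apply, dotProduct, Fin.sum_univ_three]; ring

lemma norm_cross_le (a b : Fin 3 → ℝ) :
    ‖toE3 (crossProduct a b)‖ ≤ ‖toE3 a‖ * ‖toE3 b‖ := by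
  have h1 : ‖toE3 (crossProduct a b)‖ ^ 2 ≤ (‖toE3 a‖ * ‖toE3 b‖) ^ 2 := by
    rw [norm_toE3_sq, lagrange, mul_pow, norm_toE3_sq, norm_toE3_sq]
    nlinarith [sq_nonneg (a ⬝ᵥ b)]
  have := Real.sqrt_le_sqrt h1
  rwa [Real.sqrt_sq (norm_nonneg _), Real.sqrt_sq (by positivity)] at this

lemma cross_par (y a b : Fin 3 → ℝ) :
    (y ⬝ᵥ y) • (crossProduct a b) - ((crossProduct a b) ⬝ᵥ y) • y
      = (a ⬝ᵥ y) • (crossProduct y b) - (b ⬝ᵥ y) • (crossProduct y a) := by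
  funext i
  fin_cases i <;>
    simp [cross_apply, dotProduct, Fin.sum_univ_three] <;> ring

lemma cross_proj_bounds (y a b : Fin 3 → ℝ) (hy : y ≠ 0) :
    ‖projL (toE3 y) (toE3 (crossProduct a b))‖
      ≤ ‖projPl (toE3 y) (toE3 a)‖ * ‖projPl (toE3 y) (toE3 b)‖ ∧
    ‖projPl (toE3 y) (toE3 (crossProduct a b))‖
      ≤ ‖projL (toE3 y) (toE3 a)‖ * ‖projPl (toE3 y) (toE3 b)‖
        + ‖projPl (toE3 y) (toE3 a)‖ * ‖projL (toE3 y) (toE3 b)‖ := by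
  have hd : 0 < y ⬝ᵥ y := dot_self_pos hy
  set d : ℝ := y ⬝ᵥ y with hd_def
  set α : ℝ := (a ⬝ᵥ y) / d with hα
  set β : ℝ := (b ⬝ᵥ y) / d with hβ
  set a' : Fin 3 → ℝ := a - α • y with ha'
  set b' : Fin 3 → ℝ := b - β • y with hb'
  have ha'y : a' ⬝ᵥ y = 0 := by
    rw [ha', sub_dotProduct, smul_dotProduct, smul_eq_mul, hα, ← hd_def,
      div_mul_cancel₀ _ (ne_of_gt hd), sub_self]
  have hb'y : b' ⬝ᵥ y = 0 := by
    rw [hb', sub_dotProduct, smul_dotProduct, smul_eq_mul, hβ, ← hd_def,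
      div_mul_cancel₀ _ (ne_of_gt hd), sub_self]
  have hdec : crossProduct a b
      = crossProduct a' b' + α • crossProduct y b' + β • crossProduct a' y := by
    funext i
    fin_cases i <;>
      simp [ha', hb', cross_apply, Pi.sub_apply, Pi.smul_apply, smul_eq_mul] <;> ring
  have hcy : (crossProduct a b) ⬝ᵥ y = (crossProduct a' b') ⬝ᵥ y := by
    rw [hdec, add_dotProduct, add_dotProduct, smul_dotProduct,
      smul_dotProduct, dotProduct_comm (crossProduct y b'),
      dotProduct_comm (crossProduct a' y), dot_self_cross, dot_cross_self]
    simp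
  have hpar : ((crossProduct a' b') ⬝ᵥ y / d) • y = crossProduct a' b' := by
    have := cross_par y a' b'
    rw [ha'y, hb'y, zero_smul, zero_smul, sub_zero, sub_eq_zero] at this
    rw [← hd_def] at this
    rw [div_eq_mul_inv, mul_comm, mul_smul, ← this, smul_smul,
      inv_mul_cancel₀ (ne_of_gt hd), one_smul]
  have hPa : projPl (toE3 y) (toE3 a) = toE3 a' := by
    rw [projPl_toE3, ← hd_def, ← hα, ← ha']
  have hPb : projPl (toE3 y) (toE3 b) = toE3 b' := by
    rw [projPl_toE3, ← hd_def, ← hβ, ← hb']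
  have hLa : projL (toE3 y) (toE3 a) = toE3 (α • y) := by
    rw [projL_toE3, ← hd_def, ← hα]
  have hLb : projL (toE3 y) (toE3 b) = toE3 (β • y) := by
    rw [projL_toE3, ← hd_def, ← hβ]
  have hprojL : projL (toE3 y) (toE3 (crossProduct a b)) = toE3 (crossProduct a' b') := by
    rw [projL_toE3, ← hd_def, hcy, hpar]
  have hprojPl : projPl (toE3 y) (toE3 (crossProduct a b))
      = toE3 (α • crossProduct y b' + β • crossProduct a' y) := by
    rw [projPl, hprojL, ← toE3_sub, hdec]
    exact congrArg toE3 (by abel)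
  constructor
  · rw [hprojL, hPa, hPb]
    exact norm_cross_le a' b'
  · rw [hprojPl, hPa, hPb, hLa, hLb, toE3_add, toE3_smul, toE3_smul]
    refine (norm_add_le _ _).trans ?_
    rw [norm_smul, norm_smul, toE3_smul, toE3_smul, norm_smul, norm_smul]
    have e1 : ‖α‖ * ‖toE3 (crossProduct y b')‖ ≤ ‖α‖ * (‖toE3 y‖ * ‖toE3 b'‖) :=
      mul_le_mul_of_nonneg_left (norm_cross_le y b') (norm_nonneg _)
    have e2 : ‖β‖ * ‖toE3 (crossProduct a' y)‖ ≤ ‖β‖ * (‖toE3 a'‖ * ‖toE3 y‖) :=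
      mul_le_mul_of_nonneg_left (norm_cross_le a' y) (norm_nonneg _)
    calc ‖α‖ * ‖toE3 ((crossProduct y) b')‖ + ‖β‖ * ‖toE3 ((crossProduct a') y)‖
        ≤ ‖α‖ * (‖toE3 y‖ * ‖toE3 b'‖) + ‖β‖ * (‖toE3 a'‖ * ‖toE3 y‖) := add_le_add e1 e2
      _ = ‖α‖ * ‖toE3 y‖ * ‖toE3 b'‖ + ‖toE3 a'‖ * (‖β‖ * ‖toE3 y‖) := by ring

def crossMat (A : Matrix (Fin 3) (Fin 3) ℝ) : Matrix (Fin 3) (Fin 3) ℝ :=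
  Matrix.of ![crossProduct (fun j => A j 1) (fun j => A j 2),
    crossProduct (fun j => A j 2) (fun j => A j 0),
    crossProduct (fun j => A j 0) (fun j => A j 1)]

lemma crossMat_mul (A : Matrix (Fin 3) (Fin 3) ℝ) :
    crossMat A * A = A.det • (1 : Matrix (Fin 3) (Fin 3) ℝ) := by
  ext i k
  fin_cases i <;> fin_cases k <;>
    simp [crossMat, Matrix.mul_apply, Fin.sum_univ_three, cross_apply,
      Matrix.det_fin_three, Matrix.one_apply, Matrix.smul_apply] <;> ring

lemma inv_eq_crossMat (A : Matrix (Fin 3) (Fin 3) ℝ) (hA : A.det ≠ 0) :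
    A⁻¹ = (A.det)⁻¹ • crossMat A := by
  refine Matrix.inv_eq_left_inv ?_
  rw [Matrix.smul_mul, crossMat_mul, smul_smul, inv_mul_cancel₀ hA, one_smul]


lemma le_max3 (f : Fin 3 → ℝ) (i : Fin 3) : f i ≤ max3 f := by
  fin_cases i
  · exact le_max_left _ _
  · exact ((le_max_left _ _).trans (le_max_right _ _) : f 1 ≤ max3 f)
  · exact ((le_max_right _ _).trans (le_max_right _ _) : f 2 ≤ max3 f)

lemma max3_le {f : Fin 3 → ℝ} {c : ℝ} (h : ∀ i, f i ≤ c) : max3 f ≤ c :=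
  max_le (h 0) (max_le (h 1) (h 2))

lemma max3_nonneg {f : Fin 3 → ℝ} (h : ∀ i, 0 ≤ f i) : 0 ≤ max3 f := (h 0).trans (le_max3 f 0)

lemma projL_smul (X h : E3) (c : ℝ) : projL X (c • h) = c • projL X h := by
  rw [projL, projL, real_inner_smul_left, smul_smul, mul_div_assoc]

lemma projPl_smul (X h : E3) (c : ℝ) : projPl X (c • h) = c • projPl X h := by
  rw [projPl, projPl, projL_smul, smul_sub]

lemma col_bounds (y : Fin 3 → ℝ) (hy : y ≠ 0) (A : Matrix (Fin 3) (Fin 3) ℝ) (c : ℝ)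
    (hdet : A.det = c ∨ A.det = -c) (hc : c ≠ 0) (i : Fin 3) :
    ‖projL (toE3 y) (c • toE3 fun j => A⁻¹ i j)‖
      ≤ (max3 fun k => ‖projPl (toE3 y) (toE3 fun j => A j k)‖) ^ 2 ∧
    ‖projPl (toE3 y) (c • toE3 fun j => A⁻¹ i j)‖
      ≤ 2 * (max3 fun k => ‖projPl (toE3 y) (toE3 fun j => A j k)‖)
          * (max3 fun k => ‖projL (toE3 y) (toE3 fun j => A j k)‖) := by
  have hdet0 : A.det ≠ 0 := by rcases hdet with h | h <;> rw [h] <;> simpa using hc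
  have habs : |c * (A.det)⁻¹| = 1 := by
    rcases hdet with h | h <;> rw [h] <;>
      field_simp <;> simp
  have hq : (c • toE3 fun j => A⁻¹ i j) = (c * (A.det)⁻¹) • toE3 (crossMat A i) := by
    rw [inv_eq_crossMat A hdet0]
    rw [mul_smul, ← toE3_smul]
    congr 1
  set M1 : ℝ := max3 fun k => ‖projPl (toE3 y) (toE3 fun j => A j k)‖ with hM1
  set M2 : ℝ := max3 fun k => ‖projL (toE3 y) (toE3 fun j => A j k)‖ with hM2
  have hM1n : 0 ≤ M1 := max3_nonneg fun i => norm_nonneg _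
  have hM2n : 0 ≤ M2 := max3_nonneg fun i => norm_nonneg _
  have hP : ∀ k, ‖projPl (toE3 y) (toE3 fun j => A j k)‖ ≤ M1 := fun k =>
    le_max3 (fun k => ‖projPl (toE3 y) (toE3 fun j => A j k)‖) k
  have hL : ∀ k, ‖projL (toE3 y) (toE3 fun j => A j k)‖ ≤ M2 := fun k =>
    le_max3 (fun k => ‖projL (toE3 y) (toE3 fun j => A j k)‖) k
  have key : ∀ k l : Fin 3,
      ‖projL (toE3 y) (toE3 (crossProduct (fun j => A j k) (fun j => A j l)))‖ ≤ M1 ^ 2 ∧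
      ‖projPl (toE3 y) (toE3 (crossProduct (fun j => A j k) (fun j => A j l)))‖
        ≤ 2 * M1 * M2 := by
    intro k l
    obtain ⟨h1, h2⟩ := cross_proj_bounds y (fun j => A j k) (fun j => A j l) hy
    constructor
    · refine h1.trans ?_
      rw [sq]
      exact mul_le_mul (hP k) (hP l) (norm_nonneg _) hM1n
    · refine h2.trans ?_
      have e1 : ‖projL (toE3 y) (toE3 fun j => A j k)‖ * ‖projPl (toE3 y) (toE3 fun j => A j l)‖
          ≤ M2 * M1 := mul_le_mul (hL k) (hP l) (norm_nonneg _) hM2n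
      have e2 : ‖projPl (toE3 y) (toE3 fun j => A j k)‖ * ‖projL (toE3 y) (toE3 fun j => A j l)‖
          ≤ M1 * M2 := mul_le_mul (hP k) (hL l) (norm_nonneg _) hM1n
      linarith
  have hnormL : ‖projL (toE3 y) (c • toE3 fun j => A⁻¹ i j)‖
      = ‖projL (toE3 y) (toE3 (crossMat A i))‖ := by
    rw [hq, projL_smul, norm_smul, Real.norm_eq_abs, habs, one_mul]
  have hnormP : ‖projPl (toE3 y) (c • toE3 fun j => A⁻¹ i j)‖
      = ‖projPl (toE3 y) (toE3 (crossMat A i))‖ := by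
    rw [hq, projPl_smul, norm_smul, Real.norm_eq_abs, habs, one_mul]
  rw [hnormL, hnormP]
  fin_cases i
  · exact key 1 2
  · exact key 2 0
  · exact key 0 1

/-- Lemma: polarity and Dirichlet property. -/
theorem polarity_dirichlet (Y : E3)
    (hind : LinearIndependent ℚ fun i : Fin 3 => Y i)
    (P : ℕ → Matrix (Fin 3) (Fin 3) ℤ) (D : ℤ) (hD : 0 < D)
    (hdet : ∀ s, (P s).det = D ∨ (P s).det = -D)
    (hp : MaxDirichletPlane Y fun s i => toR3 fun j => P s j i) :
    MaxDirichletLine Y fun s i =>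
      (D : ℝ) • toE3 fun j => (((P s).map fun z : ℤ => (z : ℝ))⁻¹) i j := by
  classical
  have hy : (fun i => Y i) ≠ (0 : Fin 3 → ℝ) := fun h => hind.ne_zero 0 (congrFun h 0)
  have hDne : (D : ℝ) ≠ 0 := Int.cast_ne_zero.mpr (ne_of_gt hD)
  set A : ℕ → Matrix (Fin 3) (Fin 3) ℝ := fun s => (P s).map fun z : ℤ => (z : ℝ) with hA
  have hdetA : ∀ s, (A s).det = (D : ℝ) ∨ (A s).det = -(D : ℝ) := by
    intro s
    have h0 : (A s).det = ((P s).det : ℝ) := by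
      rw [show A s = (Int.castRingHom ℝ).mapMatrix (P s) from rfl, ← RingHom.map_det]; rfl
    rcases hdet s with h | h <;> rw [h0, h] <;> push_cast <;> simp
  obtain ⟨S, hSinf, ⟨Cb, hCb⟩, htend⟩ := hp
  set M1 : ℕ → ℝ := fun s => max3 fun i => ‖projPl Y (toR3 fun j => P s j i)‖ with hM1
  set M2 : ℕ → ℝ := fun s => max3 fun i => ‖projL Y (toR3 fun j => P s j i)‖ with hM2
  set q : ℕ → Fin 3 → E3 := fun s i => (D : ℝ) • toE3 fun j => (A s)⁻¹ i j with hq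
  set N1 : ℕ → ℝ := fun s => max3 fun i => ‖projPl Y (q s i)‖ with hN1
  set N2 : ℕ → ℝ := fun s => max3 fun i => ‖projL Y (q s i)‖ with hN2
  have hM1n : ∀ s, 0 ≤ M1 s := fun s => max3_nonneg fun i => norm_nonneg _
  have hM2n : ∀ s, 0 ≤ M2 s := fun s => max3_nonneg fun i => norm_nonneg _
  have hN1n : ∀ s, 0 ≤ N1 s := fun s => max3_nonneg fun i => norm_nonneg _
  have hN2n : ∀ s, 0 ≤ N2 s := fun s => max3_nonneg fun i => norm_nonneg _
  have hCb' : ∀ s ∈ S, M1 s ^ 2 * M2 s ≤ Cb := fun s hs => hCb s hs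
  have htend2 : Filter.Tendsto M2 (Filter.atTop ⊓ Filter.principal S) (nhds 0) := htend
  have hcol : ∀ s i, ‖projL Y (q s i)‖ ≤ (M1 s) ^ 2 ∧
      ‖projPl Y (q s i)‖ ≤ 2 * M1 s * M2 s := by
    intro s i
    exact col_bounds (fun i => Y i) hy (A s) (D : ℝ) (hdetA s) hDne i
  have hN2le : ∀ s, N2 s ≤ (M1 s) ^ 2 := fun s => max3_le fun i => (hcol s i).1
  have hN1le : ∀ s, N1 s ≤ 2 * M1 s * M2 s := fun s => max3_le fun i => (hcol s i).2
  refine ⟨S, hSinf, ⟨4 * Cb ^ 2, ?_⟩, ?_⟩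
  · intro s hs
    show N1 s ^ 2 * N2 s ≤ 4 * Cb ^ 2
    have h := hCb' s hs
    have e1 : N1 s ^ 2 ≤ (2 * M1 s * M2 s) ^ 2 := by nlinarith [hN1le s, hN1n s]
    have e2 : N1 s ^ 2 * N2 s ≤ (2 * M1 s * M2 s) ^ 2 * (M1 s) ^ 2 :=
      mul_le_mul e1 (hN2le s) (hN2n s) (by positivity)
    have e3 : (M1 s ^ 2 * M2 s) ^ 2 ≤ Cb ^ 2 := by
      have h4 : 0 ≤ M1 s ^ 2 * M2 s := mul_nonneg (sq_nonneg _) (hM2n s)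
      nlinarith
    calc N1 s ^ 2 * N2 s ≤ (2 * M1 s * M2 s) ^ 2 * (M1 s) ^ 2 := e2
      _ = 4 * (M1 s ^ 2 * M2 s) ^ 2 := by ring
      _ ≤ 4 * Cb ^ 2 := by linarith
  · show Filter.Tendsto N1 (Filter.atTop ⊓ Filter.principal S) (nhds 0)
    have hup : ∀ᶠ s in Filter.atTop ⊓ Filter.principal S,
        N1 s ≤ 2 * Real.sqrt (Cb * M2 s) := by
      rw [Filter.eventually_inf_principal]
      refine Filter.Eventually.of_forall fun s hs => ?_
      have h := hCb' s hs
      have h2 : (M1 s * M2 s) ^ 2 ≤ Cb * M2 s := by nlinarith [hM2n s]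
      have h3 : M1 s * M2 s ≤ Real.sqrt (Cb * M2 s) :=
        (Real.le_sqrt (mul_nonneg (hM1n s) (hM2n s))
          ((sq_nonneg _).trans h2)).mpr h2
      linarith [hN1le s]
    have hlow : ∀ᶠ s in Filter.atTop ⊓ Filter.principal S, 0 ≤ N1 s :=
      Filter.Eventually.of_forall fun s => hN1n s
    have hsq : Filter.Tendsto (fun s => 2 * Real.sqrt (Cb * M2 s))
        (Filter.atTop ⊓ Filter.principal S) (nhds 0) := by
      have hc : Continuous fun x : ℝ => 2 * Real.sqrt (Cb * x) := by
        exact continuous_const.mul (Real.continuous_sqrt.comp (continuous_const.mul continuous_id))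
      have := (hc.tendsto 0).comp htend2
      simpa [Function.comp_def] using this
    exact tendsto_of_tendsto_of_tendsto_of_le_of_le' tendsto_const_nhds hsq hlow hup

end
end
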